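/- arXiv:1301.1940 — 15 statements merged into one kernel-verified Lean document; each statement's English description precedes it below -/
import Mathlib

section
/- Let x ∈ V, y ∈ V⁺, and set J := { j ∈ Γ | ⟨α_j, y⟩ = 0 }. Then y = 𝔏(x) if and only if x − y belongs to the closed convex cone generated by {−α_j : j ∈ J}. -/
open scoped InnerProductSpace
open Finset

/-- The closed convex cone generated by a finite family of vectors:
the set of non-negative linear combinations. -/
def coneGen {V : Type*} [AddCommGroup V] [Module ℝ V] {ι : Type*} [Fintype ι]
    (v : ι → V) : Set V :=
  {x | ∃ c : ι → ℝ, (∀ i, 0 ≤ c i) ∧ x = ∑ i, c i • v i}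

/-- `y` is a point of `K` closest to `x`. -/
def IsClosestPoint {V : Type*} [NormedAddCommGroup V] (K : Set V) (x y : V) : Prop :=
  y ∈ K ∧ ∀ z ∈ K, dist x y ≤ dist x z

lemma coneGen_convex {V : Type*} [AddCommGroup V] [Module ℝ V] {ι : Type*} [Fintype ι]
    (v : ι → V) : Convex ℝ (coneGen v) := by
  rintro _ ⟨c, hc, rfl⟩ _ ⟨d, hd, rfl⟩ a b ha hb hab
  refine ⟨fun i => a * c i + b * d i,
    fun i => add_nonneg (mul_nonneg ha (hc i)) (mul_nonneg hb (hd i)), ?_⟩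
  simp [Finset.smul_sum, Finset.sum_add_distrib, add_smul, mul_smul]

lemma isClosestPoint_iff_inner {V : Type*} [NormedAddCommGroup V] [InnerProductSpace ℝ V]
    {K : Set V} (hK : Convex ℝ K) {x y : V} (hy : y ∈ K) :
    IsClosestPoint K x y ↔ ∀ w ∈ K, ⟪x - y, w - y⟫_ℝ ≤ 0 := by
  have : Nonempty K := ⟨⟨y, hy⟩⟩
  have hbdd : BddBelow (Set.range fun w : K => ‖x - (w : V)‖) := by
    refine ⟨0, ?_⟩
    rintro _ ⟨w, rfl⟩
    exact norm_nonneg _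
  rw [← norm_eq_iInf_iff_real_inner_le_zero hK hy]
  constructor
  · rintro ⟨-, h⟩
    refine le_antisymm (le_ciInf fun w => ?_) (ciInf_le hbdd ⟨y, hy⟩)
    simpa [dist_eq_norm] using h w w.2
  · intro h
    refine ⟨hy, fun z hz => ?_⟩
    simp only [dist_eq_norm]
    rw [h]
    exact ciInf_le hbdd ⟨z, hz⟩

/-- For `x ∈ V`, `y ∈ V⁺` and `J = {j | ⟪α j, y⟫ = 0}`, one has `y = 𝔏(x)` iff
`x - y` lies in the closed convex cone generated by `{-α j : j ∈ J}`. -/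
theorem isClosestPoint_iff_cone
    {V ι : Type*} [NormedAddCommGroup V] [InnerProductSpace ℝ V] [FiniteDimensional ℝ V]
    [Fintype ι] [DecidableEq ι] (b : Module.Basis ι ℝ V) (ω : ι → V)
    (hω : ∀ i j, ⟪ω i, b j⟫_ℝ = if i = j then 1 else 0)
    (x y : V) (hy : y ∈ coneGen ω) :
    IsClosestPoint (coneGen ω) x y ↔
      ∃ c : ι → ℝ, (∀ j, 0 ≤ c j) ∧ (∀ j, ⟪(b j : V), y⟫_ℝ ≠ 0 → c j = 0) ∧
        x - y = ∑ j, c j • (-(b j : V)) := by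
  have pair : ∀ (d : ι → ℝ) (j : ι), ⟪(b j : V), ∑ i, d i • ω i⟫_ℝ = d j := by
    intro d j
    rw [real_inner_comm, sum_inner]
    simp [real_inner_smul_left, hω, Finset.sum_ite_eq']
  have pos : ∀ w ∈ coneGen ω, ∀ j, 0 ≤ ⟪(b j : V), w⟫_ℝ := by
    rintro w ⟨d, hd, rfl⟩ j; rw [pair]; exact hd j
  have reprInner : ∀ (v : V) (j : ι), ⟪v, ω j⟫_ℝ = b.repr v j := by
    intro v j
    conv_lhs => rw [← b.sum_repr v]
    rw [sum_inner]
    have key : ∀ i : ι, ⟪(b.repr v i) • (b i : V), ω j⟫_ℝ =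
        if j = i then b.repr v i else 0 := by
      intro i
      rw [real_inner_smul_left, real_inner_comm, hω]
      split <;> simp
    simp only [key, Finset.sum_ite_eq, Finset.mem_univ, if_true]
  rw [isClosestPoint_iff_inner (coneGen_convex ω) hy]
  constructor
  · intro h
    set c : ι → ℝ := fun j => -(b.repr (x - y) j) with hc
    have hxy : x - y = ∑ j, c j • (-(b j : V)) := by
      simp only [hc, smul_neg, neg_smul, neg_neg]
      exact (b.sum_repr (x - y)).symm
    have hcnn : ∀ j, 0 ≤ c j := by
      intro j
      obtain ⟨d, hd, hdy⟩ := hy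
      have hmem : y + ω j ∈ coneGen ω := by
        refine ⟨fun i => d i + if i = j then 1 else 0,
          fun i => add_nonneg (hd i) (by split <;> norm_num), ?_⟩
        rw [hdy]
        simp [add_smul, Finset.sum_add_distrib, ite_smul, Finset.sum_ite_eq']
      have h1 := h _ hmem
      rw [add_sub_cancel_left] at h1
      rw [reprInner] at h1
      simp only [hc, neg_nonneg]
      exact h1
    refine ⟨c, hcnn, ?_, hxy⟩
    have h1 : ⟪x - y, y⟫_ℝ ≤ 0 := by
      have hmem : (2:ℝ) • y ∈ coneGen ω := by
        obtain ⟨d, hd, rfl⟩ := hy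
        exact ⟨fun i => 2 * d i, fun i => mul_nonneg (by norm_num) (hd i),
          by simp [Finset.smul_sum, mul_smul]⟩
      have := h _ hmem
      rwa [two_smul, add_sub_cancel_right] at this
    have h2 : 0 ≤ ⟪x - y, y⟫_ℝ := by
      have hmem : (0:V) ∈ coneGen ω := ⟨fun _ => 0, fun _ => le_refl 0, by simp⟩
      have := h _ hmem
      rw [zero_sub, inner_neg_right] at this
      linarith
    have hzero : ⟪x - y, y⟫_ℝ = 0 := le_antisymm h1 h2
    have hexp : ⟪x - y, y⟫_ℝ = ∑ j, c j * (-⟪(b j : V), y⟫_ℝ) := by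
      conv_lhs => rw [hxy]
      rw [sum_inner]
      refine Finset.sum_congr rfl fun j _ => ?_
      rw [real_inner_smul_left, inner_neg_left, real_inner_comm]
    have hterm : ∀ j ∈ Finset.univ, c j * (-⟪(b j : V), y⟫_ℝ) ≤ 0 := by
      intro j _
      have h3 := pos y hy j
      have h4 := hcnn j
      nlinarith
    have hall := (Finset.sum_eq_zero_iff_of_nonpos hterm).mp (by rw [← hexp, hzero])
    intro j hj
    have h5 := hall j (Finset.mem_univ j)
    rcases mul_eq_zero.mp h5 with h' | h'
    · exact h'
    · exact absurd (neg_eq_zero.mp h') hj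
  · rintro ⟨c, hcnn, hcz, hxy⟩ w hw
    have hinner : ∀ z : V, ⟪x - y, z⟫_ℝ = ∑ j, c j * (-⟪(b j : V), z⟫_ℝ) := by
      intro z
      conv_lhs => rw [hxy]
      rw [sum_inner]
      refine Finset.sum_congr rfl fun j _ => ?_
      rw [real_inner_smul_left, inner_neg_left, real_inner_comm]
    have hy0 : ⟪x - y, y⟫_ℝ = 0 := by
      rw [hinner y]
      refine Finset.sum_eq_zero fun j _ => ?_
      by_cases h' : ⟪(b j : V), y⟫_ℝ = 0
      · simp [h']
      · simp [hcz j h']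
    rw [inner_sub_right, hy0, sub_zero, hinner w]
    refine Finset.sum_nonpos fun j _ => ?_
    have h3 := pos w hw j
    have h4 := hcnn j
    nlinarith
end

section
/- For every x ∈ V, the Langlands retraction satisfies 𝔏(x) ≥ x, i.e., 𝔏(x) − x lies in the closed convex cone V^pos generated by the basis vectors α_i. -/
open scoped InnerProductSpace
open Finset

/-- For every `x`, the Langlands retraction satisfies `𝔏(x) ≥ x`, i.e.
`𝔏(x) - x` lies in the cone `V^pos` generated by the basis vectors `α i`. -/
theorem langlands_retraction_ge
    {V ι : Type*} [NormedAddCommGroup V] [InnerProductSpace ℝ V] [FiniteDimensional ℝ V]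
    [Fintype ι] [DecidableEq ι] (b : Module.Basis ι ℝ V) (ω : ι → V)
    (hω : ∀ i j, ⟪ω i, b j⟫_ℝ = if i = j then 1 else 0)
    (x y : V) (hy : IsClosestPoint (coneGen ω) x y) :
    y - x ∈ coneGen (⇑b) := by
  obtain ⟨⟨c, hc, hyc⟩, hmin⟩ := hy
  -- key variational inequality
  have key : ∀ i, ⟪x - y, ω i⟫_ℝ ≤ 0 := by
    intro i
    have H : ∀ s : ℝ, 0 ≤ s → 2 * (s * ⟪x - y, ω i⟫_ℝ) ≤ s ^ 2 * ‖ω i‖ ^ 2 := by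
      intro s hs
      have hz : y + s • ω i ∈ coneGen ω := by
        refine ⟨fun j => c j + if j = i then s else 0, fun j => add_nonneg (hc j) (by split <;> simp [hs]), ?_⟩
        simp [add_smul, Finset.sum_add_distrib, ← hyc, ite_smul,
          Finset.sum_ite_eq' Finset.univ i (fun _ => s • ω i)]
      have hd := hmin _ hz
      have hd2 : ‖x - y‖ ^ 2 ≤ ‖(x - y) - s • ω i‖ ^ 2 := by
        have h1 : dist x y = ‖x - y‖ := dist_eq_norm x y
        have h2 : dist x (y + s • ω i) = ‖(x - y) - s • ω i‖ := by
          rw [dist_eq_norm, sub_add_eq_sub_sub]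
        rw [h1, h2] at hd
        exact pow_le_pow_left₀ (norm_nonneg _) hd 2
      have hexp : ‖(x - y) - s • ω i‖ ^ 2
          = ‖x - y‖ ^ 2 - 2 * ⟪x - y, s • ω i⟫_ℝ + ‖s • ω i‖ ^ 2 :=
        norm_sub_sq_real _ _
      have hi : ⟪x - y, s • ω i⟫_ℝ = s * ⟪x - y, ω i⟫_ℝ := real_inner_smul_right _ _ _
      have hn : ‖s • ω i‖ ^ 2 = s ^ 2 * ‖ω i‖ ^ 2 := by
        rw [norm_smul]; simp [mul_pow, abs_sq]
      nlinarith [hd2, hexp]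
    by_contra h
    push_neg at h
    rcases eq_or_ne (ω i) 0 with h0 | h0
    · simp [h0] at h
    · have hω2 : (0:ℝ) < ‖ω i‖ ^ 2 := pow_pos (norm_pos_iff.mpr h0) 2
      set ε := ⟪x - y, ω i⟫_ℝ
      have hs : (0:ℝ) ≤ ε / ‖ω i‖ ^ 2 := le_of_lt (div_pos h hω2)
      have := H (ε / ‖ω i‖ ^ 2) hs
      rw [div_pow] at this
      have : 2 * (ε / ‖ω i‖ ^ 2 * ε) ≤ ε ^ 2 / (‖ω i‖ ^ 2) ^ 2 * ‖ω i‖ ^ 2 := this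
      have h1 : ε ^ 2 / (‖ω i‖ ^ 2) ^ 2 * ‖ω i‖ ^ 2 = ε ^ 2 / ‖ω i‖ ^ 2 := by
        field_simp
      have h2 : 2 * (ε / ‖ω i‖ ^ 2 * ε) = 2 * (ε ^ 2 / ‖ω i‖ ^ 2) := by ring
      rw [h1, h2] at this
      have hε2 : (0:ℝ) < ε ^ 2 / ‖ω i‖ ^ 2 := div_pos (pow_pos h 2) hω2
      linarith
  -- coordinates of y - x are the inner products with ω
  refine ⟨fun i => b.repr (y - x) i, ?_, (b.sum_repr (y - x)).symm⟩
  intro i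
  have hrepr : ⟪ω i, y - x⟫_ℝ = b.repr (y - x) i := by
    conv_lhs => rw [← b.sum_repr (y - x)]
    rw [inner_sum]
    simp only [real_inner_smul_right, hω, mul_ite, mul_one, mul_zero]
    simp
  have : ⟪ω i, y - x⟫_ℝ = -⟪x - y, ω i⟫_ℝ := by
    rw [real_inner_comm, ← neg_sub x y, inner_neg_left]
  show 0 ≤ b.repr (y - x) i
  rw [← hrepr, this]
  linarith [key i]
end

section
/- If ⟨α_i, α_j⟩ ≤ 0 for all i ≠ j, then V⁺ ⊆ V^pos, i.e., every vector x with ⟨x, α_j⟩ ≥ 0 for all j is a non-negative linear combination of the α_i. -/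
open scoped InnerProductSpace
open Finset

/-- If `⟪α i, α j⟫ ≤ 0` for `i ≠ j`, then `V⁺ ⊆ V^pos`: any `x` with
`⟪x, α j⟫ ≥ 0` for all `j` is a non-negative combination of the `α i`. -/
theorem dominant_subset_pos
    {V ι : Type*} [NormedAddCommGroup V] [InnerProductSpace ℝ V] [FiniteDimensional ℝ V]
    [Fintype ι] (b : Module.Basis ι ℝ V)
    (hobtuse : ∀ i j, i ≠ j → ⟪(b i : V), b j⟫_ℝ ≤ 0)
    (x : V) (hx : ∀ j, 0 ≤ ⟪x, (b j : V)⟫_ℝ) :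
    x ∈ coneGen (⇑b) := by
  set c : ι → ℝ := fun i => b.repr x i with hc
  have hxsum : x = ∑ i, c i • b i := by
    conv_lhs => rw [← b.sum_repr x]
  set cp : ι → ℝ := fun i => max (c i) 0 with hcp
  set cn : ι → ℝ := fun i => max (-c i) 0 with hcn
  have hcpn : ∀ i, c i = cp i - cn i := by
    intro i
    rcases le_total (c i) 0 with h | h
    · simp [hcp, hcn, max_eq_right h, max_eq_left (neg_nonneg.mpr h)]
    · simp [hcp, hcn, max_eq_left h, max_eq_right (neg_nonpos.mpr h)]
  set z : V := ∑ i, cn i • b i with hz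
  set y : V := ∑ i, cp i • b i with hy
  have hxyz : x = y - z := by
    rw [hxsum, hy, hz, ← Finset.sum_sub_distrib]
    exact Finset.sum_congr rfl fun i _ => by rw [hcpn i, sub_smul]
  have hcpnn : ∀ i, 0 ≤ cp i := fun i => le_max_right _ _
  have hcnnn : ∀ i, 0 ≤ cn i := fun i => le_max_right _ _
  -- ⟪y, z⟫ ≤ 0
  have hyz : ⟪y, z⟫_ℝ ≤ 0 := by
    rw [hy, hz, inner_sum]
    apply Finset.sum_nonpos
    intro j _
    rw [sum_inner]
    apply Finset.sum_nonpos
    intro i _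
    rw [real_inner_smul_left, real_inner_smul_right]
    rcases eq_or_ne i j with rfl | hij
    · have : cp i * cn i = 0 := by
        rcases le_total (c i) 0 with h | h
        · simp [hcp, max_eq_right h]
        · simp [hcn, max_eq_right (neg_nonpos.mpr h)]
      rw [← mul_assoc, this, zero_mul]
    · have h1 := hobtuse i j hij
      nlinarith [hcpnn i, hcnnn j, mul_nonneg (hcpnn i) (hcnnn j)]
  -- ⟪x, z⟫ ≥ 0
  have hxz : 0 ≤ ⟪x, z⟫_ℝ := by
    rw [hz, inner_sum]
    apply Finset.sum_nonneg
    intro j _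
    rw [real_inner_smul_right]
    exact mul_nonneg (hcnnn j) (hx j)
  have hzz : ⟪z, z⟫_ℝ ≤ 0 := by
    have : ⟪z, z⟫_ℝ = ⟪y, z⟫_ℝ - ⟪x, z⟫_ℝ := by
      rw [hxyz, inner_sub_left]; ring
    linarith
  have hz0 : z = 0 := by
    have := real_inner_self_nonneg (x := z)
    have := inner_self_eq_zero (𝕜 := ℝ) (x := z)
    rw [← this]
    exact le_antisymm hzz (real_inner_self_nonneg)
  have hcn0 : ∀ i, cn i = 0 := by
    have hli := b.linearIndependent
    have : ∑ i, cn i • b i = ∑ i, (0 : ℝ) • b i := by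
      rw [← hz, hz0]; simp
    intro i
    exact Fintype.linearIndependent_iff.mp hli cn (by simpa using this.trans (by simp)) i
  refine ⟨c, fun i => ?_, hxsum⟩
  have := hcpn i
  rw [this, hcn0 i, sub_zero]
  exact hcpnn i
end

section
/- Let J ⊆ Γ, and suppose x lies in the span of {α_j : j ∈ J} and ⟨x, α_j⟩ ≥ 0 for all j ∈ J. If ⟨α_i, α_j⟩ ≤ 0 for all i ≠ j, then x is a non-negative linear combination of {α_j : j ∈ J}. -/
open scoped InnerProductSpace
open Finset

/-- If `x` lies in the span of `{α j : j ∈ J}` and `⟪x, α j⟫ ≥ 0` for all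
`j ∈ J`, and the basis is obtuse, then `x` is a non-negative combination of `{α j : j ∈ J}`. -/
theorem nonneg_combination_of_span
    {V ι : Type*} [NormedAddCommGroup V] [InnerProductSpace ℝ V] [FiniteDimensional ℝ V]
    [Fintype ι] (b : Module.Basis ι ℝ V)
    (hobtuse : ∀ i j, i ≠ j → ⟪(b i : V), b j⟫_ℝ ≤ 0)
    (J : Finset ι) (x : V)
    (hx : x ∈ Submodule.span ℝ (⇑b '' (J : Set ι)))
    (hpos : ∀ j ∈ J, 0 ≤ ⟪x, (b j : V)⟫_ℝ) :
    ∃ c : ι → ℝ, (∀ i, 0 ≤ c i) ∧ (∀ i ∉ J, c i = 0) ∧ x = ∑ i, c i • (b i : V) := by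
  classical
  set c : ι → ℝ := fun i => b.repr x i with hc
  have hsupp : ∀ i ∉ J, c i = 0 := by
    intro i hi
    by_contra h
    exact hi ((Module.Basis.mem_span_image b).mp hx (Finsupp.mem_support_iff.mpr h))
  set cp : ι → ℝ := fun i => max (c i) 0 with hcpdef
  set cn : ι → ℝ := fun i => max (-(c i)) 0 with hcndef
  have hcp : ∀ i, 0 ≤ cp i := fun i => le_max_right _ _
  have hcn : ∀ i, 0 ≤ cn i := fun i => le_max_right _ _
  have hsplit : ∀ i, c i = cp i - cn i := by
    intro i
    rcases le_or_gt 0 (c i) with h | h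
    · simp [hcpdef, hcndef, max_eq_left h, max_eq_right (neg_nonpos.mpr h)]
    · simp [hcpdef, hcndef, max_eq_right h.le, max_eq_left (neg_nonneg.mpr h.le)]
  have hprod : ∀ i, cn i * cp i = 0 := by
    intro i
    rcases le_or_gt 0 (c i) with h | h
    · simp [hcndef, max_eq_right (neg_nonpos.mpr h)]
    · simp [hcpdef, max_eq_right h.le]
  set y : V := ∑ i, cn i • (b i : V) with hy
  have hxr : x = ∑ i, c i • (b i : V) := (b.sum_repr x).symm
  have hxy : x + y = ∑ i, cp i • (b i : V) := by
    rw [hxr, hy, ← Finset.sum_add_distrib]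
    refine Finset.sum_congr rfl fun i _ => ?_
    rw [← add_smul]
    congr 1
    rw [hsplit i]; ring
  -- ⟨y, x⟩ ≥ 0
  have hyx : 0 ≤ ⟪y, x⟫_ℝ := by
    rw [hy, sum_inner]
    refine Finset.sum_nonneg fun i _ => ?_
    rw [real_inner_smul_left]
    rcases eq_or_ne (cn i) 0 with h | h
    · simp [h]
    · have hci : c i ≠ 0 := by
        intro h0
        apply h
        simp [hcndef, h0]
      have hiJ : i ∈ J := by
        by_contra hiJ; exact hci (hsupp i hiJ)
      have := hpos i hiJ
      rw [real_inner_comm] at this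
      exact mul_nonneg (hcn i) this
  -- ⟨y, x + y⟩ ≤ 0
  have hycp : ⟪y, x + y⟫_ℝ ≤ 0 := by
    rw [hxy, hy, sum_inner]
    refine Finset.sum_nonpos fun i _ => ?_
    rw [real_inner_smul_left, inner_sum]
    rw [Finset.mul_sum]
    refine Finset.sum_nonpos fun j _ => ?_
    rw [real_inner_smul_right]
    rcases eq_or_ne i j with rfl | hij
    · rw [← mul_assoc, hprod i, zero_mul]
    · have := hobtuse i j hij
      have : cp j * ⟪(b i : V), b j⟫_ℝ ≤ 0 := mul_nonpos_of_nonneg_of_nonpos (hcp j) this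
      exact mul_nonpos_of_nonneg_of_nonpos (hcn i) this
  have hyy : ⟪y, y⟫_ℝ ≤ 0 := by
    have : ⟪y, x + y⟫_ℝ = ⟪y, x⟫_ℝ + ⟪y, y⟫_ℝ := inner_add_right _ _ _
    linarith
  have hy0 : y = 0 := by
    have := real_inner_self_nonpos.mp hyy
    exact this
  have hcn0 : ∀ i, cn i = 0 := by
    have hli := b.linearIndependent
    have := Fintype.linearIndependent_iff.mp hli cn (by rw [← hy, hy0])
    exact this
  refine ⟨c, fun i => ?_, hsupp, hxr⟩
  rw [hsplit i, hcn0 i, sub_zero]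
  exact hcp i
end

section
/- Assume ⟨α_i, α_j⟩ ≤ 0 for i ≠ j. For each subset J ⊆ Γ, the orthogonal projection pr_J onto V_J^⊥ (with kernel V_J) is order-preserving: if x ≤ y then pr_J(x) ≤ pr_J(y), where x ≤ y means y − x ∈ V^pos. -/
open scoped InnerProductSpace
open Finset

lemma key_nonneg {V : Type*} [NormedAddCommGroup V] [InnerProductSpace ℝ V]
    {κ : Type*} [Fintype κ] {v : κ → V} (hli : LinearIndependent ℝ v)
    (hobtuse : ∀ j k, j ≠ k → ⟪v j, v k⟫_ℝ ≤ 0)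
    (c : κ → ℝ) (h : ∀ k, 0 ≤ ⟪∑ j, c j • v j, v k⟫_ℝ) :
    ∀ j, 0 ≤ c j := by
  classical
  set cm : κ → ℝ := fun j => max (-c j) 0 with hcm
  set cp : κ → ℝ := fun j => max (c j) 0 with hcp
  have hcmn : ∀ j, 0 ≤ cm j := fun j => le_max_right _ _
  have hcpn : ∀ j, 0 ≤ cp j := fun j => le_max_right _ _
  have hdiag : ∀ j, cp j * cm j = 0 := by
    intro j
    rcases le_or_gt (c j) 0 with h' | h'
    · simp [hcp, max_eq_right h']
    · simp [hcm, max_eq_right (neg_nonpos.2 h'.le)]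
  have hsplit : ∀ j, cm j = cp j - c j := by
    intro j
    rcases le_or_gt (c j) 0 with h' | h'
    · rw [show cm j = -c j from max_eq_left (neg_nonneg.2 h'),
        show cp j = 0 from max_eq_right h']; ring
    · rw [show cm j = 0 from max_eq_right (neg_nonpos.2 h'.le),
        show cp j = c j from max_eq_left h'.le]; ring
  have hum : (∑ j, cm j • v j) = (∑ j, cp j • v j) - ∑ j, c j • v j := by
    rw [← Finset.sum_sub_distrib]
    exact Finset.sum_congr rfl fun j _ => by rw [hsplit j, sub_smul]
  have h1 : ⟪∑ j, cp j • v j, ∑ k, cm k • v k⟫_ℝ ≤ 0 := by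
    rw [sum_inner]
    apply Finset.sum_nonpos
    intro j _
    rw [inner_sum]
    apply Finset.sum_nonpos
    intro k _
    rw [real_inner_smul_left, real_inner_smul_right]
    rcases eq_or_ne j k with rfl | hjk
    · rw [← mul_assoc, hdiag j, zero_mul]
    · exact mul_nonpos_of_nonneg_of_nonpos (hcpn j)
        (mul_nonpos_of_nonneg_of_nonpos (hcmn k) (hobtuse j k hjk))
  have h2 : 0 ≤ ⟪∑ j, c j • v j, ∑ k, cm k • v k⟫_ℝ := by
    rw [inner_sum]
    apply Finset.sum_nonneg
    intro k _
    rw [real_inner_smul_right]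
    exact mul_nonneg (hcmn k) (h k)
  have h3 : ⟪∑ j, cm j • v j, ∑ k, cm k • v k⟫_ℝ ≤ 0 := by
    calc ⟪∑ j, cm j • v j, ∑ k, cm k • v k⟫_ℝ
        = ⟪∑ j, cp j • v j, ∑ k, cm k • v k⟫_ℝ - ⟪∑ j, c j • v j, ∑ k, cm k • v k⟫_ℝ := by
          nth_rewrite 1 [hum]; rw [inner_sub_left]
      _ ≤ 0 := by linarith
  have hum0 : (∑ j, cm j • v j) = 0 := by
    have := real_inner_self_nonpos (x := ∑ j, cm j • v j)
    exact this.1 h3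
  have hcm0 : ∀ j, cm j = 0 := Fintype.linearIndependent_iff.1 hli cm hum0
  intro j
  have h4 : -c j ≤ cm j := le_max_left _ _
  rw [hcm0 j] at h4
  linarith

/-- For an obtuse basis, the orthogonal projection `pr_J` onto `V_J^⊥`
(with kernel `V_J = span{α j : j ∈ J}`) is order-preserving for the `V^pos` order. -/
theorem orthogonal_projection_order_preserving
    {V ι : Type*} [NormedAddCommGroup V] [InnerProductSpace ℝ V] [FiniteDimensional ℝ V]
    [Fintype ι] (b : Module.Basis ι ℝ V)
    (hobtuse : ∀ i j, i ≠ j → ⟪(b i : V), b j⟫_ℝ ≤ 0)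
    (J : Finset ι) (p : V → V)
    (hp : ∀ v : V, p v ∈ (Submodule.span ℝ (⇑b '' (J : Set ι)))ᗮ ∧
      v - p v ∈ Submodule.span ℝ (⇑b '' (J : Set ι)))
    (x y : V) (hxy : y - x ∈ coneGen (⇑b)) :
    p y - p x ∈ coneGen (⇑b) := by
  classical
  set S := Submodule.span ℝ (⇑b '' (J : Set ι)) with hS
  have huniq : ∀ w : V, w ∈ Sᗮ → w ∈ S → w = 0 := by
    intro w h1 h2
    have := (Submodule.mem_orthogonal S w).1 h1 w h2
    exact inner_self_eq_zero.1 this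
  -- each p (b i) is a nonneg combination of the basis
  have hbi : ∀ i : ι, ∃ e : ι → ℝ, (∀ k, 0 ≤ e k) ∧ p (b i) = ∑ k, e k • b k := by
    intro i
    by_cases hi : i ∈ J
    · refine ⟨0, fun k => le_refl 0, ?_⟩
      have hbiS : b i ∈ S := Submodule.subset_span ⟨i, by simpa using hi, rfl⟩
      have : p (b i) ∈ S := by
        have := (hp (b i)).2
        have h2 : b i - (b i - p (b i)) ∈ S := Submodule.sub_mem S hbiS this
        simpa using h2
      rw [huniq _ (hp (b i)).1 this]
      simp
    · -- i ∉ J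
      set q := b i - p (b i) with hq
      have hqS : q ∈ S := (hp (b i)).2
      set d : ι → ℝ := fun k => b.repr q k with hd
      have hsupp : ∀ k, k ∉ J → d k = 0 := by
        intro k hk
        have := b.mem_span_image.1 hqS
        by_contra hne
        exact hk (by exact_mod_cast this (Finsupp.mem_support_iff.2 hne))
      have hqsum : q = ∑ k, d k • b k := (b.sum_repr q).symm
      have hqJ : q = ∑ k ∈ J, d k • b k := by
        rw [hqsum]
        exact (Finset.sum_subset (Finset.subset_univ J)
          (fun k _ hk => by rw [hsupp k hk, zero_smul])).symm
      -- inner products of q with basis vectors in J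
      have hqinner : ∀ k ∈ J, ⟪q, b k⟫_ℝ = ⟪b i, b k⟫_ℝ := by
        intro k hk
        have hbkS : (b k : V) ∈ S := Submodule.subset_span ⟨k, by simpa using hk, rfl⟩
        have h0 : ⟪(b k : V), p (b i)⟫_ℝ = 0 :=
          (Submodule.mem_orthogonal S (p (b i))).1 (hp (b i)).1 _ hbkS
        have h0' : ⟪p (b i), b k⟫_ℝ = 0 := by rw [real_inner_comm]; exact h0
        rw [hq, inner_sub_left, h0', sub_zero]
      -- apply key lemma on the subtype J
      have hli : LinearIndependent ℝ (fun j : J => b j) :=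
        b.linearIndependent.comp _ Subtype.coe_injective
      have hsum' : (∑ j : J, (-(d j)) • b j) = -q := by
        have hJq : (∑ j : J, d j • (b j : V)) = q := by
          rw [Finset.univ_eq_attach, Finset.sum_attach J (fun k => d k • b k)]
          exact hqJ.symm
        rw [← hJq, ← Finset.sum_neg_distrib]
        exact Finset.sum_congr rfl fun j _ => neg_smul _ _
      have hkey : ∀ j : J, 0 ≤ -(d j) := by
        apply key_nonneg hli (fun j k hjk => hobtuse j k (fun hh => hjk (Subtype.ext hh)))
        intro k
        rw [hsum', inner_neg_left, hqinner k k.2]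
        have : ⟪(b i : V), b k⟫_ℝ ≤ 0 := hobtuse i k (fun hh => hi (hh ▸ k.2))
        linarith
      have hdnp : ∀ k, d k ≤ 0 := by
        intro k
        by_cases hk : k ∈ J
        · have := hkey ⟨k, hk⟩; simpa using by linarith [this]
        · rw [hsupp k hk]
      refine ⟨fun k => (if k = i then 1 else 0) - d k, ?_, ?_⟩
      · intro k
        simp only
        by_cases hk : k = i
        · rw [if_pos hk, hk, hsupp i hi]; norm_num
        · rw [if_neg hk]; linarith [hdnp k]
      · have hbieq : (b i : V) = ∑ k, (if k = i then (1:ℝ) else 0) • b k := by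
          symm
          simp only [ite_smul, one_smul, zero_smul]
          exact (Finset.sum_ite_eq' Finset.univ i fun k => (b k : V)).trans (if_pos (Finset.mem_univ i))
        have : p (b i) = b i - q := by rw [hq]; abel
        rw [this, hbieq, hqsum, ← Finset.sum_sub_distrib]
        exact Finset.sum_congr rfl fun k _ => by rw [sub_smul]
  choose e he hesum using hbi
  obtain ⟨c, hc, hceq⟩ := hxy
  -- p y - p x equals ∑ c i • p (b i)
  have hmem1 : (∑ i, c i • p (b i)) ∈ Sᗮ :=
    Submodule.sum_mem _ fun i _ => Submodule.smul_mem _ _ (hp (b i)).1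
  have hmem2 : (y - x) - ∑ i, c i • p (b i) ∈ S := by
    have : (y - x) - ∑ i, c i • p (b i) = ∑ i, c i • (b i - p (b i)) := by
      rw [hceq, ← Finset.sum_sub_distrib]
      exact Finset.sum_congr rfl fun i _ => by rw [smul_sub]
    rw [this]
    exact Submodule.sum_mem _ fun i _ => Submodule.smul_mem _ _ (hp (b i)).2
  have hpeq : p y - p x = ∑ i, c i • p (b i) := by
    have hA : p y - p x - ∑ i, c i • p (b i) ∈ Sᗮ :=
      Submodule.sub_mem _ (Submodule.sub_mem _ (hp y).1 (hp x).1) hmem1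
    have hB : p y - p x - ∑ i, c i • p (b i) ∈ S := by
      have h1 : (y - p y) - (x - p x) ∈ S := Submodule.sub_mem _ (hp y).2 (hp x).2
      have h2 : ((y - x) - ∑ i, c i • p (b i)) - ((y - p y) - (x - p x)) ∈ S :=
        Submodule.sub_mem _ hmem2 h1
      have : ((y - x) - ∑ i, c i • p (b i)) - ((y - p y) - (x - p x))
          = p y - p x - ∑ i, c i • p (b i) := by abel
      rwa [this] at h2
    have := huniq _ hA hB
    exact sub_eq_zero.1 this
  rw [hpeq]
  refine ⟨fun k => ∑ i, c i * e i k,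
    fun k => Finset.sum_nonneg fun i _ => mul_nonneg (hc i) (he i k), ?_⟩
  calc ∑ i, c i • p (b i) = ∑ i, ∑ k, (c i * e i k) • b k := by
        refine Finset.sum_congr rfl fun i _ => ?_
        rw [hesum i, Finset.smul_sum]
        exact Finset.sum_congr rfl fun k _ => smul_smul _ _ _
    _ = ∑ k, (∑ i, c i * e i k) • b k := by
        rw [Finset.sum_comm]
        exact Finset.sum_congr rfl fun k _ => (Finset.sum_smul).symm
end

section
/- Assume ⟨α_i, α_j⟩ ≤ 0 for i ≠ j. For each i ∉ J, pr_J(α_i) = α_i + x where x ∈ V_J satisfies ⟨x, α_j⟩ = −⟨α_i, α_j⟩ for all j ∈ J, and moreover pr_J(α_i) ∈ V^pos. -/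
open scoped InnerProductSpace
open Finset

/-- Auxiliary: in an obtuse basis, a vector whose inner products with all basis
vectors in the support region are nonnegative has nonnegative coordinates. -/
theorem coords_nonneg_of_inner_nonneg
    {V ι : Type*} [NormedAddCommGroup V] [InnerProductSpace ℝ V]
    [Fintype ι] (b : Module.Basis ι ℝ V)
    (hobtuse : ∀ i j, i ≠ j → ⟪(b i : V), b j⟫_ℝ ≤ 0)
    (x : V) (hx : ∀ k, ⟪x, (b k : V)⟫_ℝ ≥ 0 ∨ b.repr x k = 0) (k : ι) :
    0 ≤ b.repr x k := by
  set c : ι → ℝ := fun k => b.repr x k with hc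
  set cn : ι → ℝ := fun k => max (-(c k)) 0 with hcn
  set cp : ι → ℝ := fun k => max (c k) 0 with hcp
  have hcnn : ∀ k, 0 ≤ cn k := fun k => le_max_right _ _
  have hcpn : ∀ k, 0 ≤ cp k := fun k => le_max_right _ _
  have hsplit : ∀ k, c k = cp k - cn k := by
    intro k
    rcases le_total 0 (c k) with h | h
    · simp [hcn, hcp, max_eq_left, max_eq_right, h, neg_nonpos.mpr h]
    · simp [hcn, hcp, max_eq_right h, max_eq_left (neg_nonneg.mpr h)]
  have hmul : ∀ k, cp k * cn k = 0 := by
    intro k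
    rcases le_total 0 (c k) with h | h
    · simp [hcn, max_eq_right (neg_nonpos.mpr h)]
    · simp [hcp, max_eq_right h]
  have hcn0 : ∀ k, c k = 0 → cn k = 0 := by
    intro k h; simp [hcn, h]
  set vn : V := ∑ k, cn k • b k with hvn
  set vp : V := ∑ k, cp k • b k with hvp
  have hxsum : x = ∑ k, c k • b k := (b.sum_repr x).symm
  have hxv : x = vp - vn := by
    rw [hxsum, hvp, hvn, ← Finset.sum_sub_distrib]
    congr 1; ext k; rw [← sub_smul, ← hsplit]
  -- ⟪x, vn⟫ ≥ 0
  have h1 : 0 ≤ ⟪x, vn⟫_ℝ := by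
    rw [hvn, inner_sum]
    apply Finset.sum_nonneg
    intro k _
    rw [real_inner_smul_right]
    rcases hx k with h | h
    · exact mul_nonneg (hcnn k) h
    · rw [hcn0 k h]; simp
  -- ⟪vp, vn⟫ ≤ 0
  have h2 : ⟪vp, vn⟫_ℝ ≤ 0 := by
    rw [hvp, sum_inner]
    apply Finset.sum_nonpos
    intro j _
    rw [real_inner_smul_left, hvn, inner_sum, Finset.mul_sum]
    apply Finset.sum_nonpos
    intro l _
    rw [real_inner_smul_right, ← mul_assoc]
    by_cases hjl : j = l
    · subst hjl; rw [hmul]; simp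
    · exact mul_nonpos_of_nonneg_of_nonpos (mul_nonneg (hcpn j) (hcnn l)) (hobtuse j l hjl)
  have hvn0 : vn = 0 := by
    have : ⟪vn, vn⟫_ℝ ≤ 0 := by
      have : ⟪vn, vn⟫_ℝ = ⟪vp, vn⟫_ℝ - ⟪x, vn⟫_ℝ := by
        rw [hxv]; rw [inner_sub_left]; ring
      linarith
    exact real_inner_self_nonpos.mp this
  have hcnall : ∀ k, cn k = 0 :=
    Fintype.linearIndependent_iff.mp b.linearIndependent cn (by rw [← hvn]; exact hvn0)
  have : cn k = 0 := hcnall k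
  have : -(c k) ≤ 0 := by
    by_contra h
    push_neg at h
    have : cn k = -(c k) := max_eq_left h.le
    rw [hcnall k] at this
    linarith
  linarith

/-- For an obtuse basis and `i ∉ J`, `pr_J(α i) = α i + x` where `x ∈ V_J`
satisfies `⟪x, α j⟫ = -⟪α i, α j⟫` for all `j ∈ J`, and moreover `pr_J(α i) ∈ V^pos`. -/
theorem projection_of_basis_vector
    {V ι : Type*} [NormedAddCommGroup V] [InnerProductSpace ℝ V] [FiniteDimensional ℝ V]
    [Fintype ι] (b : Module.Basis ι ℝ V)
    (hobtuse : ∀ i j, i ≠ j → ⟪(b i : V), b j⟫_ℝ ≤ 0)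
    (J : Finset ι) (p : V → V)
    (hp : ∀ v : V, p v ∈ (Submodule.span ℝ (⇑b '' (J : Set ι)))ᗮ ∧
      v - p v ∈ Submodule.span ℝ (⇑b '' (J : Set ι)))
    (i : ι) (hi : i ∉ J) :
    (∃ x ∈ Submodule.span ℝ (⇑b '' (J : Set ι)),
        (∀ j ∈ J, ⟪x, (b j : V)⟫_ℝ = -⟪(b i : V), (b j : V)⟫_ℝ) ∧
        p (b i) = b i + x) ∧
      p (b i) ∈ coneGen (⇑b) := by
  classical
  obtain ⟨hperp, hspan⟩ := hp (b i)
  set x : V := p (b i) - b i with hx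
  have hxmem : x ∈ Submodule.span ℝ (⇑b '' (J : Set ι)) := by
    have := Submodule.neg_mem _ hspan
    rw [neg_sub] at this
    exact this
  have hinner : ∀ j ∈ J, ⟪x, (b j : V)⟫_ℝ = -⟪(b i : V), (b j : V)⟫_ℝ := by
    intro j hj
    have hbj : (b j : V) ∈ Submodule.span ℝ (⇑b '' (J : Set ι)) :=
      Submodule.subset_span ⟨j, hj, rfl⟩
    have h0 : ⟪(b j : V), p (b i)⟫_ℝ = 0 :=
      (Submodule.mem_orthogonal _ _).mp hperp (b j) hbj
    rw [hx, inner_sub_left, real_inner_comm (b j) (p (b i)), h0]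
    ring
  have heq : p (b i) = b i + x := by rw [hx]; abel
  refine ⟨⟨x, hxmem, hinner, heq⟩, ?_⟩
  -- cone membership
  have hsupp : ∀ k, k ∉ J → b.repr x k = 0 := by
    intro k hk
    by_contra h
    exact hk (b.mem_span_image.mp hxmem (Finsupp.mem_support_iff.mpr h))
  have hrepr_nonneg : ∀ k, 0 ≤ b.repr x k := by
    apply coords_nonneg_of_inner_nonneg b hobtuse
    intro k
    by_cases hk : k ∈ J
    · left
      rw [hinner k hk]
      have : i ≠ k := fun h => hi (h ▸ hk)
      linarith [hobtuse i k this]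
    · right; exact hsupp k hk
  refine ⟨fun k => (if k = i then 1 else 0) + b.repr x k, ?_, ?_⟩
  · intro k
    have := hrepr_nonneg k
    by_cases hki : k = i <;> simp [hki] <;> linarith [hrepr_nonneg i]
  · have key : ∑ k, ((if k = i then (1:ℝ) else 0) + b.repr x k) • b k = b i + x := by
      simp only [add_smul, Finset.sum_add_distrib, ite_smul, one_smul, zero_smul]
      rw [Finset.sum_ite_eq' Finset.univ i (fun k => (b k : V))]
      simp [b.sum_repr x]
    rw [heq, ← key]
end

section
/- Assume ⟨α_i, α_j⟩ ≤ 0 for i ≠ j. Then for every x ∈ V, 𝔏(x) is the least element of the set { y ∈ V⁺ : y ≥ x } with respect to the partial order defined by V^pos. -/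
open scoped InnerProductSpace
open Finset

set_option linter.unusedSectionVars false

section Aux
variable {V ι : Type*} [NormedAddCommGroup V] [InnerProductSpace ℝ V]
  [Fintype ι] [DecidableEq ι]

lemma lr_inner_sum_smul {b ω : ι → V} (hω : ∀ i j, ⟪ω i, b j⟫_ℝ = if i = j then 1 else 0)
    (f : ι → ℝ) (s : Finset ι) (i : ι) :
    ⟪ω i, ∑ j ∈ s, f j • b j⟫_ℝ = if i ∈ s then f i else 0 := by
  rw [inner_sum]
  have : ∀ j ∈ s, ⟪ω i, f j • b j⟫_ℝ = if j = i then f j else 0 := by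
    intro j _
    rw [real_inner_smul_right, hω]
    by_cases h : i = j <;> simp [h, eq_comm]
  rw [Finset.sum_congr rfl this, Finset.sum_ite_eq' s i f]

lemma lr_coneGen_convex (v : ι → V) : Convex ℝ (coneGen v) := by
  rintro y ⟨c, hc, rfl⟩ z ⟨d, hd, rfl⟩ a b' ha hb hab
  refine ⟨fun i => a * c i + b' * d i, fun i => add_nonneg (mul_nonneg ha (hc i)) (mul_nonneg hb (hd i)), ?_⟩
  simp [Finset.smul_sum, Finset.sum_add_distrib, smul_smul, add_smul]

lemma lr_coneGen_add {v : ι → V} {y z : V} (hy : y ∈ coneGen v) (hz : z ∈ coneGen v) :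
    y + z ∈ coneGen v := by
  obtain ⟨c, hc, rfl⟩ := hy
  obtain ⟨d, hd, rfl⟩ := hz
  exact ⟨fun i => c i + d i, fun i => add_nonneg (hc i) (hd i), by
    simp [Finset.sum_add_distrib, add_smul]⟩

lemma lr_coneGen_smul {v : ι → V} {y : V} (hy : y ∈ coneGen v) {t : ℝ} (ht : 0 ≤ t) :
    t • y ∈ coneGen v := by
  obtain ⟨c, hc, rfl⟩ := hy
  exact ⟨fun i => t * c i, fun i => mul_nonneg ht (hc i), by
    simp [Finset.smul_sum, smul_smul]⟩

lemma lr_coneGen_zero (v : ι → V) : (0 : V) ∈ coneGen v :=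
  ⟨fun _ => 0, fun _ => le_rfl, by simp⟩

end Aux

section Aux2
set_option linter.unusedSectionVars false
variable {V ι : Type*} [NormedAddCommGroup V] [InnerProductSpace ℝ V]
  [Fintype ι] [DecidableEq ι]

lemma lr_repr_eq (b : Module.Basis ι ℝ V) {ω : ι → V}
    (hω : ∀ i j, ⟪ω i, b j⟫_ℝ = if i = j then 1 else 0) (v : V) (i : ι) :
    ⟪ω i, v⟫_ℝ = b.repr v i := by
  conv_lhs => rw [← b.sum_repr v]
  rw [lr_inner_sum_smul hω (fun j => b.repr v j) Finset.univ i]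
  simp

lemma lr_eq_sum (b : Module.Basis ι ℝ V) {ω : ι → V}
    (hω : ∀ i j, ⟪ω i, b j⟫_ℝ = if i = j then 1 else 0) (v : V) :
    v = ∑ i, ⟪ω i, v⟫_ℝ • b i := by
  conv_lhs => rw [← b.sum_repr v]
  exact Finset.sum_congr rfl fun i _ => by rw [lr_repr_eq b hω]

/-- membership in coneGen b iff all ω-inner-products nonneg -/
lemma lr_mem_coneGen_b (b : Module.Basis ι ℝ V) {ω : ι → V}
    (hω : ∀ i j, ⟪ω i, b j⟫_ℝ = if i = j then 1 else 0) (v : V) :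
    v ∈ coneGen (⇑b) ↔ ∀ i, 0 ≤ ⟪ω i, v⟫_ℝ := by
  constructor
  · rintro ⟨c, hc, rfl⟩ i
    rw [lr_inner_sum_smul hω c Finset.univ i]
    simpa using hc i
  · intro h
    exact ⟨fun i => ⟪ω i, v⟫_ℝ, h, lr_eq_sum b hω v⟩

lemma lr_inner_b_omega {b ω : ι → V}
    (hω : ∀ i j, ⟪ω i, b j⟫_ℝ = if i = j then 1 else 0)
    (f : ι → ℝ) (i : ι) :
    ⟪b i, ∑ j, f j • ω j⟫_ℝ = f i := by
  rw [inner_sum]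
  have : ∀ j ∈ Finset.univ, ⟪(b i : V), f j • ω j⟫_ℝ = if j = i then f j else 0 := by
    intro j _
    rw [real_inner_smul_right, real_inner_comm, hω]
    by_cases h : j = i <;> simp [h]
  rw [Finset.sum_congr rfl this, Finset.sum_ite_eq' Finset.univ i f]
  simp

end Aux2


/-- For an obtuse basis, `𝔏(x)` is the least element of `{y ∈ V⁺ | y ≥ x}`
with respect to the partial order defined by `V^pos`. -/
theorem langlands_retraction_least
    {V ι : Type*} [NormedAddCommGroup V] [InnerProductSpace ℝ V] [FiniteDimensional ℝ V]
    [Fintype ι] [DecidableEq ι] (b : Module.Basis ι ℝ V) (ω : ι → V)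
    (hω : ∀ i j, ⟪ω i, b j⟫_ℝ = if i = j then 1 else 0)
    (hobtuse : ∀ i j, i ≠ j → ⟪(b i : V), b j⟫_ℝ ≤ 0)
    (x Lx : V) (hLx : IsClosestPoint (coneGen ω) x Lx) :
    Lx ∈ coneGen ω ∧ Lx - x ∈ coneGen (⇑b) ∧
      ∀ z, z ∈ coneGen ω → z - x ∈ coneGen (⇑b) → z - Lx ∈ coneGen (⇑b) := by
  obtain ⟨hmem, hmin⟩ := hLx
  haveI : Nonempty (coneGen ω) := ⟨⟨Lx, hmem⟩⟩
  -- the variational inequality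
  have hinf : ‖x - Lx‖ = ⨅ w : coneGen ω, ‖x - w‖ := by
    refine le_antisymm (le_ciInf fun w => ?_)
      (ciInf_le (f := fun w : coneGen ω => ‖x - (w : V)‖) ⟨0, by rintro _ ⟨w, rfl⟩; exact norm_nonneg _⟩ ⟨Lx, hmem⟩)
    have := hmin w w.2
    rwa [dist_eq_norm, dist_eq_norm] at this
  have key : ∀ z ∈ coneGen ω, ⟪x - Lx, z - Lx⟫_ℝ ≤ 0 :=
    (norm_eq_iInf_iff_real_inner_le_zero (lr_coneGen_convex ω) hmem).mp hinf
  have hωmem : ∀ i, ω i ∈ coneGen ω := fun i =>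
    ⟨fun j => if j = i then 1 else 0, fun j => by by_cases h : j = i <;> simp [h],
      by simp [ite_smul, Finset.sum_ite_eq']⟩
  have h1 : ∀ i, ⟪x - Lx, ω i⟫_ℝ ≤ 0 := fun i => by
    have := key (Lx + ω i) (lr_coneGen_add hmem (hωmem i))
    simpa using this
  have h2 : ⟪x - Lx, Lx⟫_ℝ = 0 := by
    have hle : ⟪x - Lx, Lx⟫_ℝ ≤ 0 := by
      have := key ((2:ℝ) • Lx) (lr_coneGen_smul hmem (by norm_num))
      have h2' : (2:ℝ) • Lx - Lx = Lx := by
        rw [two_smul]; abel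
      rw [h2'] at this
      exact this
    have hge : 0 ≤ ⟪x - Lx, Lx⟫_ℝ := by
      have := key 0 (lr_coneGen_zero ω)
      simp only [zero_sub, inner_neg_right] at this
      linarith
    linarith
  -- part 2
  have hd : Lx - x ∈ coneGen (⇑b) := by
    rw [lr_mem_coneGen_b b hω]
    intro i
    have := h1 i
    rw [real_inner_comm]
    have : ⟪Lx - x, ω i⟫_ℝ = -⟪x - Lx, ω i⟫_ℝ := by
      rw [← inner_neg_left]; congr 1; abel
    rw [real_inner_comm] at this ⊢
    linarith [h1 i, this]
  refine ⟨hmem, hd, ?_⟩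
  -- part 3 : minimality
  intro z hz hzx
  obtain ⟨f, hf, hfeq⟩ := hmem
  obtain ⟨g, hg, hgeq⟩ := hz
  set c : ι → ℝ := fun i => ⟪ω i, z - Lx⟫_ℝ with hc
  have hdLx : ⟪Lx - x, Lx⟫_ℝ = 0 := by
    have : ⟪Lx - x, Lx⟫_ℝ = -⟪x - Lx, Lx⟫_ℝ := by
      rw [← inner_neg_left]; congr 1; abel
    rw [this, h2, neg_zero]
  -- complementarity: for each i, ⟪ω i, Lx - x⟫ * f i = 0
  have hcompl : ∀ i, ⟪ω i, Lx - x⟫_ℝ * f i = 0 := by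
    have hsum : ∑ i, ⟪ω i, Lx - x⟫_ℝ * f i = 0 := by
      have hrw : ⟪Lx - x, Lx⟫_ℝ = ∑ i, ⟪ω i, Lx - x⟫_ℝ * f i := by
        conv_lhs => rw [lr_eq_sum b hω (Lx - x), sum_inner]
        refine Finset.sum_congr rfl fun i _ => ?_
        rw [real_inner_smul_left, hfeq, lr_inner_b_omega hω f i]
      rw [← hrw, hdLx]
    have hnn : ∀ i ∈ Finset.univ, 0 ≤ ⟪ω i, Lx - x⟫_ℝ * f i := fun i _ =>
      mul_nonneg ((lr_mem_coneGen_b b hω _).mp hd i) (hf i)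
    intro i
    exact (Finset.sum_eq_zero_iff_of_nonneg hnn).mp hsum i (Finset.mem_univ i)
  -- coords of z - x are nonneg
  have hzxc : ∀ i, 0 ≤ ⟪ω i, z - x⟫_ℝ := (lr_mem_coneGen_b b hω _).mp hzx
  -- for i with c i < 0, f i = 0
  have hfzero : ∀ i, c i < 0 → f i = 0 := by
    intro i hci
    have hsplit : c i = ⟪ω i, z - x⟫_ℝ - ⟪ω i, Lx - x⟫_ℝ := by
      rw [hc]; simp only [← inner_sub_right]; congr 1; abel
    have hpos : 0 < ⟪ω i, Lx - x⟫_ℝ := by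
      have h' := hci
      rw [hsplit] at h'
      have := hzxc i
      linarith
    have := hcompl i
    rcases mul_eq_zero.mp this with h | h
    · exact absurd h (ne_of_gt hpos)
    · exact h
  set N : Finset ι := Finset.univ.filter (fun i => c i < 0) with hN
  set v : V := ∑ i ∈ N, c i • b i with hv
  have hwsum : z - Lx = ∑ i, c i • b i := lr_eq_sum b hω (z - Lx)
  have hwv : z - Lx - v = ∑ i ∈ Finset.univ.filter (fun i => ¬ c i < 0), c i • b i := by
    rw [hwsum, hv, hN]
    rw [← Finset.sum_filter_add_sum_filter_not Finset.univ (fun i => c i < 0) (fun i => c i • b i)]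
    abel
  -- T2 : ⟪v, (z - Lx) - v⟫ ≥ 0
  have hT2 : 0 ≤ ⟪v, z - Lx - v⟫_ℝ := by
    rw [hwv, hv, sum_inner]
    refine Finset.sum_nonneg fun i hi => ?_
    rw [inner_sum]
    refine Finset.sum_nonneg fun j hj => ?_
    rw [real_inner_smul_left, real_inner_smul_right]
    have hiN : c i < 0 := (Finset.mem_filter.mp hi).2
    have hjN : ¬ c j < 0 := (Finset.mem_filter.mp hj).2
    have hij : i ≠ j := fun h => hjN (h ▸ hiN)
    have := hobtuse i j hij
    have hcj : 0 ≤ c j := not_lt.mp hjN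
    have h1' : c j * ⟪(b i : V), b j⟫_ℝ ≤ 0 := mul_nonpos_of_nonneg_of_nonpos hcj this
    exact mul_nonneg_of_nonpos_of_nonpos hiN.le h1'
  -- T1 : ⟪v, z - Lx⟫ ≤ 0
  have hT1 : ⟪v, z - Lx⟫_ℝ ≤ 0 := by
    have hvz : ⟪v, z⟫_ℝ ≤ 0 := by
      rw [hv, sum_inner]
      refine Finset.sum_nonpos fun i hi => ?_
      rw [real_inner_smul_left, hgeq, lr_inner_b_omega hω g i]
      have hiN : c i < 0 := (Finset.mem_filter.mp hi).2
      exact mul_nonpos_of_nonpos_of_nonneg (le_of_lt hiN) (hg i)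
    have hvLx : ⟪v, Lx⟫_ℝ = 0 := by
      rw [hv, sum_inner]
      refine Finset.sum_eq_zero fun i hi => ?_
      rw [real_inner_smul_left, hfeq, lr_inner_b_omega hω f i]
      have hiN : c i < 0 := (Finset.mem_filter.mp hi).2
      rw [hfzero i hiN, mul_zero]
    rw [inner_sub_right, hvLx]
    linarith
  have hvv : ⟪v, v⟫_ℝ ≤ 0 := by
    have h := inner_sub_right (𝕜 := ℝ) (x := v) (y := z - Lx) (z := v)
    linarith
  have hv0 : v = 0 := by
    have := real_inner_self_nonpos (x := v)
    exact this.mp hvv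
  rw [lr_mem_coneGen_b b hω]
  intro i
  by_contra hlt
  push_neg at hlt
  have hlt' : c i < 0 := hlt
  have hiN : i ∈ N := by rw [hN]; exact Finset.mem_filter.mpr ⟨Finset.mem_univ i, hlt'⟩
  have hcv : ⟪ω i, v⟫_ℝ = c i := by
    rw [hv, lr_inner_sum_smul hω c N i, if_pos hiN]
  rw [hv0, inner_zero_right] at hcv
  exact absurd hcv.symm (ne_of_lt hlt')
end

section
/- Assume ⟨α_i, α_j⟩ ≤ 0 for i ≠ j. If (x_t) is a nonempty family of vectors in V⁺ and y is their coordinatewise infimum with respect to expansion in the basis {α_i} (which exists since each coordinate of each x_t is ≥ 0), then y ∈ V⁺. -/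
open scoped InnerProductSpace
open Finset

/-- For an obtuse basis, coordinates of an element of `V⁺` are nonnegative. -/
lemma coords_nonneg_of_obtuse
    {V ι : Type*} [NormedAddCommGroup V] [InnerProductSpace ℝ V]
    [Fintype ι] (b : Module.Basis ι ℝ V)
    (hobtuse : ∀ i j, i ≠ j → ⟪(b i : V), b j⟫_ℝ ≤ 0)
    (d : ι → ℝ) (h : ∀ i, 0 ≤ ⟪∑ j, d j • (b j : V), (b i : V)⟫_ℝ) :
    ∀ j, 0 ≤ d j := by
  classical
  set S : Finset ι := Finset.univ.filter (fun j => d j < 0) with hS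
  set x : V := ∑ j, d j • (b j : V) with hx
  set xneg : V := ∑ j ∈ S, (-d j) • (b j : V) with hxneg
  set xpos : V := ∑ j ∈ Sᶜ, d j • (b j : V) with hxpos
  have hsplit : x = xpos - xneg := by
    rw [hx, hxpos, hxneg, ← Finset.sum_filter_add_sum_filter_not Finset.univ
      (fun j => d j < 0)]
    have : Sᶜ = Finset.univ.filter (fun j => ¬ d j < 0) := by
      ext j; simp [hS]
    rw [this]
    simp [neg_smul, Finset.sum_neg_distrib]
    abel
  -- ⟪x, xneg⟫ ≥ 0
  have h1 : 0 ≤ ⟪x, xneg⟫_ℝ := by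
    rw [hxneg, inner_sum]
    apply Finset.sum_nonneg
    intro k hk
    rw [real_inner_smul_right]
    have hk' : d k < 0 := by simpa [hS] using hk
    exact mul_nonneg (by linarith) (h k)
  -- ⟪xpos, xneg⟫ ≤ 0
  have h2 : ⟪xpos, xneg⟫_ℝ ≤ 0 := by
    rw [hxpos, hxneg, sum_inner]
    apply Finset.sum_nonpos
    intro j hj
    rw [inner_sum]
    apply Finset.sum_nonpos
    intro k hk
    rw [real_inner_smul_left, real_inner_smul_right]
    have hjS : ¬ d j < 0 := by
      have := Finset.mem_compl.mp hj; simpa [hS] using this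
    have hkS : d k < 0 := by simpa [hS] using hk
    have hjk : j ≠ k := by rintro rfl; exact hjS hkS
    have := hobtuse j k hjk
    have : d j * (-d k * ⟪(b j : V), b k⟫_ℝ) ≤ 0 :=
      mul_nonpos_of_nonneg_of_nonpos (by linarith)
        (mul_nonpos_of_nonneg_of_nonpos (by linarith) this)
    linarith [this]
  have hzero : xneg = 0 := by
    have : ⟪xneg, xneg⟫_ℝ ≤ 0 := by
      have : ⟪xneg, xneg⟫_ℝ = ⟪xpos, xneg⟫_ℝ - ⟪x, xneg⟫_ℝ := by
        rw [hsplit, inner_sub_left]; ring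
      linarith
    have hnn := real_inner_self_nonneg (x := xneg)
    exact inner_self_eq_zero.mp (le_antisymm this hnn)
  intro j
  by_contra hdj
  push_neg at hdj
  have hjS : j ∈ S := by simp [hS, hdj]
  -- extend the sum over S to a full sum with if-coefficients
  have hfull : ∑ k, (if k ∈ S then -d k else 0) • (b k : V) = 0 := by
    rw [← hzero, hxneg]
    simp only [ite_smul, zero_smul, Finset.sum_ite_mem, Finset.univ_inter]
  have := (Fintype.linearIndependent_iff.mp b.linearIndependent)
      (fun k => if k ∈ S then -d k else 0) hfull j
  simp [hjS] at this
  linarith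

/-- For an obtuse basis, if `(x t)` is a nonempty family in
`V⁺ = {v | ∀ i, ⟪v, α i⟫ ≥ 0}` with basis coordinates `c t`, then the coordinatewise
infimum `∑ i, (⨅ t, c t i) • α i` again lies in `V⁺`. -/
theorem infimum_mem_dominant
    {V ι : Type*} [NormedAddCommGroup V] [InnerProductSpace ℝ V] [FiniteDimensional ℝ V]
    [Fintype ι] (b : Module.Basis ι ℝ V)
    (hobtuse : ∀ i j, i ≠ j → ⟪(b i : V), b j⟫_ℝ ≤ 0)
    {T : Type*} [Nonempty T] (c : T → ι → ℝ)
    (hmem : ∀ t, ∀ i, 0 ≤ ⟪∑ j, c t j • (b j : V), (b i : V)⟫_ℝ) :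
    ∀ i, 0 ≤ ⟪∑ j, (⨅ t, c t j) • (b j : V), (b i : V)⟫_ℝ := by
  classical
  have hcnn : ∀ t j, 0 ≤ c t j := fun t =>
    coords_nonneg_of_obtuse b hobtuse (c t) (hmem t)
  set m : ι → ℝ := fun j => ⨅ t, c t j with hm
  have hbdd : ∀ j, BddBelow (Set.range fun t => c t j) :=
    fun j => ⟨0, by rintro _ ⟨t, rfl⟩; exact hcnn t j⟩
  have hmle : ∀ t j, m j ≤ c t j := fun t j => ciInf_le (hbdd j) t
  have hm0 : ∀ j, 0 ≤ m j := fun j => le_ciInf (fun t => hcnn t j)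
  intro i
  have hNi : (0:ℝ) < ⟪(b i : V), b i⟫_ℝ := by
    rw [real_inner_self_eq_norm_sq]
    exact pow_pos (norm_pos_iff.mpr (b.ne_zero i)) 2
  set N := ⟪(b i : V), b i⟫_ℝ with hN
  rw [sum_inner]
  simp only [real_inner_smul_left]
  apply le_of_forall_pos_le_add
  intro ε hε
  have hε' : 0 < ε / N := div_pos hε hNi
  obtain ⟨t, ht⟩ : ∃ t, c t i < m i + ε / N :=
    exists_lt_of_ciInf_lt (by linarith [hm0 i] : ⨅ t, c t i < m i + ε / N)
  have hx : 0 ≤ ∑ j, c t j * ⟪(b j : V), b i⟫_ℝ := by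
    have := hmem t i
    rw [sum_inner] at this
    simpa [real_inner_smul_left] using this
  have hdiff : ∑ j, (c t j - m j) * ⟪(b j : V), b i⟫_ℝ ≤ ε := by
    calc ∑ j, (c t j - m j) * ⟪(b j : V), b i⟫_ℝ
        ≤ ∑ j, (if j = i then ε else 0) := by
          apply Finset.sum_le_sum
          intro j _
          by_cases hji : j = i
          · subst hji
            simp only [if_pos rfl]
            have h1 : c t j - m j ≤ ε / N := by linarith
            have := mul_le_mul_of_nonneg_right h1 (le_of_lt hNi)
            rw [div_mul_cancel₀ _ (ne_of_gt hNi)] at this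
            exact le_trans (mul_le_mul_of_nonneg_right h1 hNi.le |>.trans_eq
              (div_mul_cancel₀ _ (ne_of_gt hNi))) le_rfl
          · simp only [if_neg hji]
            exact mul_nonpos_of_nonneg_of_nonpos
              (by linarith [hmle t j]) (hobtuse j i hji)
      _ = ε := by simp
  have hsum : ∑ j, c t j * ⟪(b j : V), b i⟫_ℝ
      = ∑ j, m j * ⟪(b j : V), b i⟫_ℝ
        + ∑ j, (c t j - m j) * ⟪(b j : V), b i⟫_ℝ := by
    rw [← Finset.sum_add_distrib]
    congr 1; funext j; ring
  show 0 ≤ ∑ j, m j * ⟪(b j : V), b i⟫_ℝ + ε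
  linarith [hx, hdiff, hsum]
end

section
/- Assume ⟨α_i, α_j⟩ ≤ 0 for i ≠ j. Then for any x ∈ V, the set { y ∈ V⁺ : y ≥ x } is nonempty and has a least element (its infimum belongs to the set). -/
open scoped InnerProductSpace
open Finset

lemma mem_coneGen_iff_repr {V ι : Type*} [AddCommGroup V] [Module ℝ V]
    [Fintype ι] [DecidableEq ι] (b : Module.Basis ι ℝ V) (v : V) :
    v ∈ coneGen (⇑b) ↔ ∀ i, 0 ≤ b.repr v i := by
  constructor
  · rintro ⟨c, hc, rfl⟩ i
    have : (b.repr (∑ j, c j • b j)) i = c i := by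
      simp [map_sum, Finsupp.single_apply]
    rw [this]; exact hc i
  · intro h
    exact ⟨fun i => b.repr v i, h, (b.sum_repr v).symm⟩

/-- For an obtuse basis, for every `x` the set `{y ∈ V⁺ | y ≥ x}` is
nonempty and has a least element. -/
theorem least_majorant_exists
    {V ι : Type*} [NormedAddCommGroup V] [InnerProductSpace ℝ V] [FiniteDimensional ℝ V]
    [Fintype ι] (b : Module.Basis ι ℝ V)
    (hobtuse : ∀ i j, i ≠ j → ⟪(b i : V), b j⟫_ℝ ≤ 0)
    (x : V) :
    ∃ m, ((∀ i, 0 ≤ ⟪m, (b i : V)⟫_ℝ) ∧ m - x ∈ coneGen (⇑b)) ∧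
      ∀ z, (∀ i, 0 ≤ ⟪z, (b i : V)⟫_ℝ) → z - x ∈ coneGen (⇑b) → z - m ∈ coneGen (⇑b) := by
  classical
  set β : ι → V := fun i =>
    (InnerProductSpace.toDual ℝ V).symm ((b.coord i).toContinuousLinearMap) with hβ
  have hβrepr : ∀ i v, ⟪β i, v⟫_ℝ = b.repr v i := by
    intro i v
    simp [hβ, InnerProductSpace.toDual_symm_apply]
  set K : Set V := {y | ∀ i, 0 ≤ ⟪y, (b i : V)⟫_ℝ} with hK
  have hne : K.Nonempty := ⟨0, fun i => by simp⟩
  have hclosed : IsClosed K := by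
    have : K = ⋂ i, {y | 0 ≤ ⟪y, (b i : V)⟫_ℝ} := by
      ext y; simp [hK, Set.mem_iInter]
    rw [this]
    exact isClosed_iInter fun i =>
      isClosed_le continuous_const (Continuous.inner continuous_id continuous_const)
  have hconv : Convex ℝ K := by
    intro y hy z hz a c ha hc _ i
    simp only [inner_add_left, real_inner_smul_left]
    exact add_nonneg (mul_nonneg ha (hy i)) (mul_nonneg hc (hz i))
  obtain ⟨m, hmK, hm⟩ := exists_norm_eq_iInf_of_complete_convex hne
    (hclosed.isComplete) hconv x
  rw [norm_eq_iInf_iff_real_inner_le_zero hconv hmK] at hm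
  have horth : ⟪x - m, m⟫_ℝ = 0 := by
    have h0 := hm 0 (fun i => by simp)
    have h2 := hm ((2:ℝ) • m) (fun i => by
      rw [real_inner_smul_left]; exact mul_nonneg (by norm_num) (hmK i))
    simp only [zero_sub, inner_neg_right] at h0
    rw [two_smul] at h2
    simp only [add_sub_cancel_right] at h2
    linarith
  have hdual : ∀ y ∈ K, ⟪x - m, y⟫_ℝ ≤ 0 := by
    intro y hy
    have h := hm (y + m) (fun i => by
      rw [inner_add_left]; exact add_nonneg (hy i) (hmK i))
    simpa using h
  have hβK : ∀ i, β i ∈ K := by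
    intro i j
    rw [hβrepr]
    simp only [Module.Basis.repr_self, Finsupp.single_apply]
    split <;> norm_num
  have hmx : m - x ∈ coneGen (⇑b) := by
    rw [mem_coneGen_iff_repr]
    intro i
    have h1 := hdual (β i) (hβK i)
    rw [real_inner_comm] at h1
    have h2 : ⟪β i, m - x⟫_ℝ = - ⟪β i, x - m⟫_ℝ := by
      rw [← inner_neg_right]; congr 1; abel
    rw [← hβrepr i (m - x), h2]
    linarith
  set d : ι → ℝ := fun i => b.repr (m - x) i with hd
  have hd0 : ∀ i, 0 ≤ d i := (mem_coneGen_iff_repr b _).1 hmx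
  have hsum : ∑ i, d i * ⟪(b i : V), m⟫_ℝ = 0 := by
    have h3 : ⟪m - x, m⟫_ℝ = 0 := by
      rw [← neg_sub x m, inner_neg_left, horth, neg_zero]
    calc ∑ i, d i * ⟪(b i : V), m⟫_ℝ
        = ⟪∑ i, d i • b i, m⟫_ℝ := by
          rw [sum_inner]
          exact Finset.sum_congr rfl fun i _ => (real_inner_smul_left _ _ _).symm
      _ = ⟪m - x, m⟫_ℝ := by rw [b.sum_repr (m - x)]
      _ = 0 := h3
  have hslack : ∀ i, d i * ⟪(b i : V), m⟫_ℝ = 0 := by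
    intro i
    have hnn : ∀ j ∈ univ, 0 ≤ d j * ⟪(b j : V), m⟫_ℝ := fun j _ => by
      have h4 := hmK j; rw [real_inner_comm] at h4
      exact mul_nonneg (hd0 j) h4
    exact (Finset.sum_eq_zero_iff_of_nonneg hnn).1 hsum i (mem_univ i)
  refine ⟨m, ⟨hmK, hmx⟩, ?_⟩
  intro z hzK hzx
  set c : ι → ℝ := fun i => b.repr (z - m) i with hc
  set A : Finset ι := univ.filter (fun i => c i < 0) with hA
  set n : V := ∑ i ∈ A, (-c i) • b i with hn
  set p : V := ∑ i ∈ Aᶜ, c i • b i with hp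
  have hzm : z - m = p - n := by
    have h1 : n = -∑ i ∈ A, c i • b i := by
      simp [hn, neg_smul, Finset.sum_neg_distrib]
    rw [hp, h1, sub_neg_eq_add, Finset.sum_compl_add_sum]
    exact (b.sum_repr (z - m)).symm
  -- decompose c i = e i - d i
  have hcd : ∀ i, c i = b.repr (z - x) i - d i := by
    intro i
    have : z - m = (z - x) - (m - x) := by abel
    rw [hc, hd]; simp only [this, map_sub, Finsupp.sub_apply]
  have he0 : ∀ i, 0 ≤ b.repr (z - x) i := (mem_coneGen_iff_repr b _).1 hzx
  have hbm0 : ∀ i ∈ A, ⟪(b i : V), m⟫_ℝ = 0 := by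
    intro i hi
    rw [hA, Finset.mem_filter] at hi
    have hci : c i < 0 := hi.2
    have hdi : 0 < d i := by
      have := hcd i; have := he0 i; linarith
    have := hslack i
    rcases mul_eq_zero.1 this with h | h
    · exact absurd h (ne_of_gt hdi)
    · exact h
  have hnp : ⟪n, p⟫_ℝ ≤ 0 := by
    rw [hn, hp, sum_inner]
    apply Finset.sum_nonpos
    intro i hi
    rw [real_inner_smul_left, inner_sum]
    have hci : c i < 0 := (Finset.mem_filter.1 hi).2
    apply mul_nonpos_of_nonneg_of_nonpos (by linarith)
    apply Finset.sum_nonpos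
    intro j hj
    rw [real_inner_smul_right]
    have hj' : j ∉ A := Finset.mem_compl.1 hj
    have hcj : 0 ≤ c j := by
      by_contra h
      exact hj' (Finset.mem_filter.2 ⟨mem_univ j, lt_of_not_ge h⟩)
    have hij : i ≠ j := fun h => hj' (h ▸ hi)
    exact mul_nonpos_of_nonneg_of_nonpos hcj (hobtuse i j hij)
  have hnz : 0 ≤ ⟪n, z⟫_ℝ := by
    rw [hn, sum_inner]
    apply Finset.sum_nonneg
    intro i hi
    rw [real_inner_smul_left]
    have hci : c i < 0 := (Finset.mem_filter.1 hi).2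
    have := hzK i; rw [real_inner_comm] at this
    exact mul_nonneg (by linarith) this
  have hnm : ⟪n, m⟫_ℝ = 0 := by
    rw [hn, sum_inner]
    apply Finset.sum_eq_zero
    intro i hi
    rw [real_inner_smul_left, hbm0 i hi, mul_zero]
  have hnn : ⟪n, n⟫_ℝ ≤ 0 := by
    have hpn : p = (z - m) + n := by rw [hzm]; abel
    have : ⟪n, p⟫_ℝ = ⟪n, z⟫_ℝ - ⟪n, m⟫_ℝ + ⟪n, n⟫_ℝ := by
      rw [hpn, inner_add_right, inner_sub_right]
    linarith
  have hn0 : n = 0 := by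
    have := real_inner_self_nonneg (x := n)
    exact inner_self_eq_zero.1 (le_antisymm hnn this)
  have hAempty : ∀ i, 0 ≤ c i := by
    intro i
    by_contra h
    have hiA : i ∈ A := Finset.mem_filter.2 ⟨mem_univ i, lt_of_not_ge h⟩
    have hrepr : b.repr n i = -c i := by
      rw [hn, map_sum]
      simp only [map_smul, Module.Basis.repr_self, Finsupp.coe_finset_sum, Finset.sum_apply,
        Finsupp.coe_smul, Pi.smul_apply, Finsupp.single_apply, smul_eq_mul]
      rw [Finset.sum_eq_single i]
      · simp
      · intro j _ hji; simp [hji]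
      · intro habs; exact absurd hiA habs
    rw [hn0, map_zero] at hrepr
    simp at hrepr
    linarith
  rw [mem_coneGen_iff_repr]
  exact hAempty
end

section
/- The cones K_J for J ⊆ Γ cover V, where K_J is the closed convex cone generated by {ω_j : j ∈ Γ ∖ J} and {−α_i : i ∈ J}. -/
open scoped InnerProductSpace
open Finset

/-- The cones `K_J` (generated by `{ω j : j ∉ J}` and `{-α i : i ∈ J}`)
for `J ⊆ Γ` cover `V`. -/
theorem cones_cover
    {V ι : Type*} [NormedAddCommGroup V] [InnerProductSpace ℝ V] [FiniteDimensional ℝ V]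
    [Fintype ι] [DecidableEq ι] (b : Module.Basis ι ℝ V) (ω : ι → V)
    (hω : ∀ i j, ⟪ω i, b j⟫_ℝ = if i = j then 1 else 0)
    (x : V) :
    ∃ J : Finset ι, x ∈ coneGen (fun i => if i ∈ J then -(b i : V) else ω i) := by
  classical
  rcases isEmpty_or_nonempty ι with hι | hι
  · have hsub : Subsingleton V := by
      have : Module.finrank ℝ V = 0 := by
        rw [Module.finrank_eq_card_basis b, Fintype.card_eq_zero]
      exact Module.finrank_zero_iff.mp this
    exact ⟨∅, fun _ => 0, fun i => le_refl 0, by simp [Subsingleton.elim x 0]⟩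
  -- ω is linearly independent, hence a basis
  have hli : LinearIndependent ℝ ω := by
    rw [Fintype.linearIndependent_iff]
    intro g hg j
    have h1 : ⟪∑ i, g i • ω i, b j⟫_ℝ = g j := by
      rw [sum_inner]
      simp [real_inner_smul_left, hω]
    rw [hg] at h1
    simpa using h1.symm
  have hcard : Fintype.card ι = Module.finrank ℝ V :=
    (Module.finrank_eq_card_basis b).symm
  let Bω : Module.Basis ι ℝ V := basisOfLinearIndependentOfCardEqFinrank hli hcard
  have hBω : ⇑Bω = ω := coe_basisOfLinearIndependentOfCardEqFinrank hli hcard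
  set S : Set V := {y | ∀ i, 0 ≤ Bω.repr y i} with hSdef
  have hconv : Convex ℝ S := by
    intro y hy z hz a a' ha ha' hab i
    simp only [hSdef, Set.mem_setOf_eq, map_add, map_smul, Finsupp.add_apply,
      Finsupp.smul_apply, smul_eq_mul]
    exact add_nonneg (mul_nonneg ha (hy i)) (mul_nonneg ha' (hz i))
  have hclosed : IsClosed S := by
    have hSeq : S = ⋂ i, (Bω.coord i) ⁻¹' Set.Ici 0 := by
      ext y
      simp [hSdef, Set.mem_iInter, Module.Basis.coord_apply]
    rw [hSeq]
    exact isClosed_iInter fun i =>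
      (isClosed_Ici.preimage (Bω.coord i).continuous_of_finiteDimensional)
  have h0S : (0 : V) ∈ S := by intro i; simp
  obtain ⟨p, hpS, hpmin⟩ :=
    exists_norm_eq_iInf_of_complete_convex ⟨0, h0S⟩ hclosed.isComplete hconv x
  have hproj : ∀ w ∈ S, ⟪x - p, w - p⟫_ℝ ≤ 0 :=
    (norm_eq_iInf_iff_real_inner_le_zero hconv hpS).mp hpmin
  set c : ι → ℝ := fun i => Bω.repr p i with hcdef
  set d : ι → ℝ := fun i => -(b.repr (x - p) i) with hddef
  have hc : ∀ i, 0 ≤ c i := hpS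
  -- the key inner product computation
  have hinner : ∀ j, ⟪x - p, ω j⟫_ℝ = -(d j) := by
    intro j
    have h1 : ⟪ω j, x - p⟫_ℝ = b.repr (x - p) j := by
      conv_lhs => rw [← b.sum_repr (x - p)]
      rw [inner_sum]
      simp [real_inner_smul_right, hω]
    rw [real_inner_comm] at h1
    simp [hddef, h1]
  have hωjS : ∀ j, p + ω j ∈ S := by
    intro j i
    have hωj : Bω.repr (ω j) = Finsupp.single j 1 := by
      rw [← hBω]; exact Bω.repr_self j
    rw [map_add, hωj]
    simp only [Finsupp.add_apply]
    have h2 : (0:ℝ) ≤ (Finsupp.single j 1 : ι →₀ ℝ) i := by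
      rw [Finsupp.single_apply]
      split <;> norm_num
    exact add_nonneg (hpS i) h2
  have hd : ∀ j, 0 ≤ d j := by
    intro j
    have := hproj (p + ω j) (hωjS j)
    rw [add_sub_cancel_left, hinner j] at this
    linarith
  -- complementary slackness
  have hzero : ⟪x - p, p⟫_ℝ = 0 := by
    have h2p : p + p ∈ S := by
      intro i
      rw [map_add]
      exact add_nonneg (hpS i) (hpS i)
    have h1 := hproj (p + p) h2p
    rw [add_sub_cancel_left] at h1
    have h2 := hproj 0 h0S
    rw [zero_sub, inner_neg_right] at h2
    linarith
  have hp : p = ∑ i, c i • ω i := by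
    have h1 := Bω.sum_repr p
    rw [hBω] at h1
    exact h1.symm
  have hterm : ∀ i, c i * d i = 0 := by
    have hsum : ∑ i, c i * d i = 0 := by
      have h1 : ⟪x - p, p⟫_ℝ = ∑ i, c i * (-(d i)) := by
        nth_rewrite 2 [hp]
        rw [inner_sum]
        simp [real_inner_smul_right, hinner]
      rw [hzero] at h1
      have : ∑ i, c i * (-(d i)) = -∑ i, c i * d i := by
        rw [← Finset.sum_neg_distrib]
        exact Finset.sum_congr rfl fun i _ => by ring
      rw [this] at h1
      linarith
    intro i
    have := (Finset.sum_eq_zero_iff_of_nonneg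
      (fun i _ => mul_nonneg (hc i) (hd i))).mp hsum
    exact this i (Finset.mem_univ i)
  set J : Finset ι := Finset.univ.filter (fun i => d i ≠ 0) with hJdef
  refine ⟨J, fun i => if i ∈ J then d i else c i, ?_, ?_⟩
  · intro i
    dsimp only
    split
    · exact hd i
    · exact hc i
  · have hxp : x - p = ∑ i, d i • (-(b i)) := by
      conv_lhs => rw [← b.sum_repr (x - p)]
      refine Finset.sum_congr rfl fun i _ => ?_
      rw [smul_neg, ← neg_smul]
      simp [hddef]
    have hx : x = ∑ i, (c i • ω i + d i • (-(b i))) := by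
      rw [Finset.sum_add_distrib, ← hp, ← hxp]
      abel
    rw [hx]
    refine Finset.sum_congr rfl fun i _ => ?_
    by_cases hi : i ∈ J
    · have hdi : d i ≠ 0 := by
        simpa [hJdef] using hi
      have hci : c i = 0 := by
        rcases mul_eq_zero.mp (hterm i) with h | h
        · exact h
        · exact absurd h hdi
      simp [hi, hci]
    · have hdi : d i = 0 := by
        by_contra h
        exact hi (by simp [hJdef, h])
      simp [hi, hdi]
end

section
/- For each J ⊆ Γ, the cone K_J is a simplicial cone of full dimension in V, i.e., the vectors {ω_j : j ∉ J} ∪ {−α_i : i ∈ J} form a basis of V. -/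
open scoped InnerProductSpace
open Finset

/-- For each `J ⊆ Γ`, the cone `K_J` is simplicial of full dimension:
the vectors `{ω j : j ∉ J} ∪ {-α i : i ∈ J}` form a basis of `V`. -/
theorem cone_simplicial
    {V ι : Type*} [NormedAddCommGroup V] [InnerProductSpace ℝ V] [FiniteDimensional ℝ V]
    [Fintype ι] [DecidableEq ι] (b : Module.Basis ι ℝ V) (ω : ι → V)
    (hω : ∀ i j, ⟪ω i, b j⟫_ℝ = if i = j then 1 else 0)
    (J : Finset ι) :
    LinearIndependent ℝ (fun i => if i ∈ J then -(b i : V) else ω i) ∧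
      Submodule.span ℝ (Set.range (fun i => if i ∈ J then -(b i : V) else ω i)) = ⊤ := by
  classical
  have hli : LinearIndependent ℝ (fun i => if i ∈ J then -(b i : V) else ω i) := by
    rw [Fintype.linearIndependent_iff]
    intro g hg
    set x : V := ∑ i ∈ J, g i • b i with hx
    set y : V := ∑ i ∈ Jᶜ, g i • ω i with hy
    have hxy : y = x := by
      have hsplit : ∑ i, g i • (if i ∈ J then -(b i : V) else ω i)
          = (∑ i ∈ J, g i • (-(b i : V))) + ∑ i ∈ Jᶜ, g i • ω i := by
        rw [← Finset.sum_add_sum_compl J]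
        congr 1
        · exact Finset.sum_congr rfl fun i hi => by simp [hi]
        · exact Finset.sum_congr rfl fun i hi => by
            simp [Finset.mem_compl.mp hi]
      rw [hsplit] at hg
      have h2 : -x + y = 0 := by
        rw [hx, ← Finset.sum_neg_distrib]
        simpa [smul_neg] using hg
      exact (neg_add_eq_zero.mp h2).symm
    -- ⟪ω i, x⟫ = 0 for i ∉ J
    have hox : ∀ i ∈ Jᶜ, ⟪ω i, x⟫_ℝ = 0 := by
      intro i hi
      rw [hx, inner_sum]
      rw [Finset.sum_eq_zero]
      intro k hk
      rw [real_inner_smul_right, hω]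
      have : i ≠ k := fun h => (Finset.mem_compl.mp hi) (h ▸ hk)
      simp [this]
    have hyx : ⟪y, x⟫_ℝ = 0 := by
      rw [hy, sum_inner]
      exact Finset.sum_eq_zero fun i hi => by
        rw [real_inner_smul_left, hox i hi, mul_zero]
    have hx0 : x = 0 := inner_self_eq_zero.mp (hxy ▸ hyx)
    have hy0 : y = 0 := hxy.trans hx0
    have hgJ : ∀ i ∈ J, g i = 0 := by
      have h := Fintype.linearIndependent_iff.mp b.linearIndependent
        (fun k => if k ∈ J then g k else 0)
      have hsum : ∑ k, (if k ∈ J then g k else 0) • b k = 0 := by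
        rw [← hx0, hx, ← Finset.sum_add_sum_compl J]
        have h1 : ∑ k ∈ J, (if k ∈ J then g k else 0) • b k = ∑ k ∈ J, g k • b k :=
          Finset.sum_congr rfl fun k hk => by simp [hk]
        have h2 : ∑ k ∈ Jᶜ, (if k ∈ J then g k else 0) • b k = 0 :=
          Finset.sum_eq_zero fun k hk => by simp [Finset.mem_compl.mp hk]
        rw [h1, h2, add_zero]
      intro i hi
      have := h hsum i
      simpa [hi] using this
    intro i
    by_cases hiJ : i ∈ J
    · exact hgJ i hiJ
    · -- pair y with b i
      have h := congrArg (fun z => ⟪z, b i⟫_ℝ) hy0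
      simp only [hy, sum_inner, inner_zero_left, real_inner_smul_left, hω] at h
      simpa [mul_ite, Finset.sum_ite_eq', Finset.mem_compl, hiJ] using h
  refine ⟨hli, ?_⟩
  exact hli.span_eq_top_of_card_eq_finrank' (Module.finrank_eq_card_basis b).symm
end

section
/- For each J ⊆ Γ and each x ∈ K_J, the Langlands retraction satisfies 𝔏(x) = pr_J(x), where pr_J is the orthogonal projection onto V_J^⊥ with kernel V_J. In particular 𝔏 is linear on each cone K_J. -/
open scoped InnerProductSpace
open Finset

/-- For `x ∈ K_J`, the Langlands retraction satisfies `𝔏(x) = pr_J(x)`,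
where `pr_J` is the orthogonal projection onto `V_J^⊥` with kernel `V_J`.
In particular `𝔏` is linear on each cone `K_J`. -/
theorem langlands_retraction_eq_projection_on_cone
    {V ι : Type*} [NormedAddCommGroup V] [InnerProductSpace ℝ V] [FiniteDimensional ℝ V]
    [Fintype ι] [DecidableEq ι] (b : Module.Basis ι ℝ V) (ω : ι → V)
    (hω : ∀ i j, ⟪ω i, b j⟫_ℝ = if i = j then 1 else 0)
    (J : Finset ι) (p : V → V)
    (hp : ∀ v : V, p v ∈ (Submodule.span ℝ (⇑b '' (J : Set ι)))ᗮ ∧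
      v - p v ∈ Submodule.span ℝ (⇑b '' (J : Set ι)))
    (x : V) (hx : x ∈ coneGen (fun i => if i ∈ J then -(b i : V) else ω i))
    (y : V) (hy : IsClosestPoint (coneGen ω) x y) :
    y = p x := by
  classical
  obtain ⟨c, hc, hxeq⟩ := hx
  obtain ⟨⟨d, hd, hyeq⟩, hmin⟩ := hy
  set U := Submodule.span ℝ (⇑b '' (J : Set ι)) with hU
  set xp : V := ∑ i ∈ Finset.univ.filter (· ∉ J), c i • ω i with hxp
  set m : V := ∑ i ∈ Finset.univ.filter (· ∈ J), c i • b i with hm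
  -- x = xp - m
  have hx' : x = xp - m := by
    rw [hxeq, ← Finset.sum_filter_add_sum_filter_not Finset.univ (· ∈ J)]
    have h1 : ∑ i ∈ Finset.univ.filter (· ∈ J),
        c i • (fun i => if i ∈ J then -(b i : V) else ω i) i = -m := by
      rw [hm, ← Finset.sum_neg_distrib]
      refine Finset.sum_congr rfl fun i hi => ?_
      simp only [Finset.mem_filter] at hi
      simp only [if_pos hi.2, smul_neg]
    have h2 : ∑ i ∈ Finset.univ.filter (· ∉ J),
        c i • (fun i => if i ∈ J then -(b i : V) else ω i) i = xp := by
      rw [hxp]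
      refine Finset.sum_congr rfl fun i hi => ?_
      simp only [Finset.mem_filter] at hi
      simp only [if_neg hi.2]
    rw [h1, h2]; abel
  -- ⟪b i, xp⟫ = 0 for i ∈ J
  have hbxp : ∀ i ∈ J, ⟪b i, xp⟫_ℝ = 0 := by
    intro i hi
    rw [hxp, inner_sum]
    refine Finset.sum_eq_zero fun k hk => ?_
    simp only [Finset.mem_filter] at hk
    rw [real_inner_smul_right, real_inner_comm, hω k i, if_neg, mul_zero]
    rintro rfl; exact hk.2 hi
  -- ⟪b j, y⟫ = d j
  have hby : ∀ j, ⟪b j, y⟫_ℝ = d j := by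
    intro j
    rw [hyeq, inner_sum]
    rw [Finset.sum_eq_single j]
    · rw [real_inner_smul_right, real_inner_comm, hω j j, if_pos rfl, mul_one]
    · intro k _ hk
      rw [real_inner_smul_right, real_inner_comm, hω k j, if_neg hk, mul_zero]
    · intro h; exact absurd (Finset.mem_univ j) h
  -- m ∈ U
  have hmU : m ∈ U := by
    refine Submodule.sum_mem _ fun i hi => Submodule.smul_mem _ _ ?_
    simp only [Finset.mem_filter] at hi
    exact Submodule.subset_span ⟨i, hi.2, rfl⟩
  -- xp ∈ Uᗮ
  have hxpW : xp ∈ Uᗮ := by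
    rw [Submodule.mem_orthogonal]
    intro u hu
    induction hu using Submodule.span_induction with
    | mem u hu =>
      obtain ⟨j, hj, rfl⟩ := hu
      exact hbxp j hj
    | zero => simp
    | add u v _ _ h1 h2 => rw [inner_add_left, h1, h2, add_zero]
    | smul a u _ h1 => rw [real_inner_smul_left, h1, mul_zero]
  -- xp = p x
  have hxppx : xp = p x := by
    have h1 := (hp x).1
    have h2 := (hp x).2
    have hdiffU : xp - p x ∈ U := by
      have heq : xp - p x = (x - p x) + m := by rw [hx']; abel
      rw [heq]; exact U.add_mem h2 hmU
    have hdiffW : xp - p x ∈ Uᗮ := Submodule.sub_mem _ hxpW h1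
    have : ⟪xp - p x, xp - p x⟫_ℝ = 0 :=
      (Submodule.mem_orthogonal _ _).mp hdiffW _ hdiffU
    have := inner_self_eq_zero.mp this
    exact sub_eq_zero.mp this
  -- xp ∈ coneGen ω
  have hxpc : xp ∈ coneGen ω := by
    refine ⟨fun i => if i ∈ J then 0 else c i, fun i => ?_, ?_⟩
    · by_cases hi : i ∈ J <;> simp [hi, hc i]
    · rw [hxp, Finset.sum_filter]
      refine Finset.sum_congr rfl fun i _ => ?_
      by_cases hi : i ∈ J <;> simp [hi]
  -- ⟪m, xp⟫ = 0
  have hmxp : ⟪m, xp⟫_ℝ = 0 := by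
    rw [hm, sum_inner]
    refine Finset.sum_eq_zero fun i hi => ?_
    simp only [Finset.mem_filter] at hi
    rw [real_inner_smul_left, hbxp i hi.2, mul_zero]
  -- ⟪m, y⟫ ≥ 0
  have hmy : 0 ≤ ⟪m, y⟫_ℝ := by
    rw [hm, sum_inner]
    refine Finset.sum_nonneg fun i hi => ?_
    rw [real_inner_smul_left, hby i]
    exact mul_nonneg (hc i) (hd i)
  -- distance estimate
  have hdle : dist x y ≤ dist x xp := hmin xp hxpc
  have hxxp : x - xp = -m := by rw [hx']; abel
  have hdxp : dist x xp = ‖m‖ := by rw [dist_eq_norm, hxxp, norm_neg]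
  have hxy : x - y = (xp - y) - m := by rw [hx']; abel
  have hnorm : ‖x - y‖ ^ 2 = ‖xp - y‖ ^ 2 - 2 * ⟪xp - y, m⟫_ℝ + ‖m‖ ^ 2 := by
    rw [hxy]; exact norm_sub_sq_real _ _
  have hinner : ⟪xp - y, m⟫_ℝ = -⟪m, y⟫_ℝ := by
    rw [inner_sub_left]
    have e1 : ⟪xp, m⟫_ℝ = 0 := by rw [real_inner_comm]; exact hmxp
    rw [e1, real_inner_comm y m]
    ring
  have hle2 : ‖x - y‖ ^ 2 ≤ ‖m‖ ^ 2 := by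
    rw [dist_eq_norm, hdxp] at hdle
    have h0 : (0:ℝ) ≤ ‖x - y‖ := norm_nonneg _
    nlinarith
  have hxpy : ‖xp - y‖ ^ 2 ≤ 0 := by
    rw [hnorm, hinner] at hle2
    nlinarith
  have : xp - y = 0 := by
    have : ‖xp - y‖ = 0 := by nlinarith [norm_nonneg (xp - y)]
    exact norm_eq_zero.mp this
  rw [← hxppx, ← sub_eq_zero]
  rw [← neg_sub]
  rw [this, neg_zero]
end

section
/- If ⟨α_i, α_j⟩ ∈ ℚ for all i, j, then the Langlands retraction preserves rationality: 𝔏(V^ℚ) ⊆ V^ℚ, where V^ℚ is the ℚ-span of the α_i. -/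
open scoped InnerProductSpace
open Finset

/-- If all inner products `⟪α i, α j⟫` are rational, then the Langlands
retraction preserves rationality: `𝔏(V^ℚ) ⊆ V^ℚ` where `V^ℚ` is the ℚ-span of the `α i`. -/
theorem langlands_retraction_rational
    {V ι : Type*} [NormedAddCommGroup V] [InnerProductSpace ℝ V] [FiniteDimensional ℝ V]
    [Fintype ι] [DecidableEq ι] (b : Module.Basis ι ℝ V) (ω : ι → V)
    (hω : ∀ i j, ⟪ω i, b j⟫_ℝ = if i = j then 1 else 0)
    (hrat : ∀ i j, ∃ q : ℚ, ⟪(b i : V), b j⟫_ℝ = (q : ℝ))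
    (x : V) (hx : ∃ c : ι → ℚ, x = ∑ i, (c i : ℝ) • (b i : V))
    (y : V) (hy : IsClosestPoint (coneGen ω) x y) :
    ∃ c : ι → ℚ, y = ∑ i, (c i : ℝ) • (b i : V) := by
  classical
  obtain ⟨hyK, hymin⟩ := hy
  -- Convexity of the cone
  have hconv : Convex ℝ (coneGen ω) := by
    rintro u ⟨cu, hcu, rfl⟩ v ⟨cv, hcv, rfl⟩ a a' ha ha' hab
    refine ⟨fun i => a * cu i + a' * cv i,
      fun i => add_nonneg (mul_nonneg ha (hcu i)) (mul_nonneg ha' (hcv i)), ?_⟩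
    simp [Finset.smul_sum, Finset.sum_add_distrib, add_smul, mul_smul]
  -- Variational inequality
  haveI : Nonempty (coneGen ω) := ⟨⟨y, hyK⟩⟩
  have hmin : ‖x - y‖ = ⨅ w : coneGen ω, ‖x - w‖ := by
    apply le_antisymm
    · exact le_ciInf fun z => by simpa [dist_eq_norm] using hymin z z.2
    · exact ciInf_le ⟨0, fun _ ⟨_, h⟩ => h ▸ norm_nonneg _⟩ (⟨y, hyK⟩ : coneGen ω)
  have hvar : ∀ w ∈ coneGen ω, ⟪x - y, w - y⟫_ℝ ≤ 0 :=
    (norm_eq_iInf_iff_real_inner_le_zero hconv hyK).mp hmin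
  obtain ⟨c, hc0, hcy⟩ := hyK
  -- ⟪x - y, ω i⟫ ≤ 0
  have h1 : ∀ i, ⟪x - y, ω i⟫_ℝ ≤ 0 := by
    intro i
    have hmem : y + ω i ∈ coneGen ω := by
      refine ⟨fun j => c j + if j = i then 1 else 0,
        fun j => add_nonneg (hc0 j) (by split <;> norm_num), ?_⟩
      simp [add_smul, Finset.sum_add_distrib, ite_smul, hcy]
    simpa using hvar (y + ω i) hmem
  -- ⟪x - y, y⟫ = 0
  have h2 : ⟪x - y, y⟫_ℝ = 0 := by
    have hz : (0 : V) ∈ coneGen ω := ⟨fun _ => 0, fun _ => le_refl _, by simp⟩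
    have h2y : (2 : ℝ) • y ∈ coneGen ω := by
      refine ⟨fun j => 2 * c j, fun j => by have := hc0 j; positivity, ?_⟩
      simp [hcy, Finset.smul_sum, mul_smul]
    have l1 := hvar 0 hz
    have l2 := hvar ((2 : ℝ) • y) h2y
    have e : (2 : ℝ) • y - y = y := by rw [two_smul]; abel
    rw [e] at l2
    simp only [zero_sub, inner_neg_right] at l1
    linarith
  -- each term vanishes
  have hterm : ∀ i, c i * ⟪x - y, ω i⟫_ℝ = 0 := by
    have hsum : ∑ i, c i * ⟪x - y, ω i⟫_ℝ = 0 := by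
      rw [← h2, hcy, inner_sum]
      exact Finset.sum_congr rfl fun i _ => (real_inner_smul_right _ _ _).symm
    intro i
    have := (Finset.sum_eq_zero_iff_of_nonpos
      (fun j _ => mul_nonpos_of_nonneg_of_nonpos (hc0 j) (h1 j))).mp hsum
    exact this i (Finset.mem_univ i)
  set S : Finset ι := Finset.univ.filter fun i => ⟪x - y, ω i⟫_ℝ = 0 with hS
  have hcS : ∀ i ∉ S, c i = 0 := by
    intro i hi
    have hne : ⟪x - y, ω i⟫_ℝ ≠ 0 := by
      simpa [hS] using hi
    rcases mul_eq_zero.mp (hterm i) with h | h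
    · exact h
    · exact absurd h hne
  have hyS : y = ∑ i ∈ S, c i • ω i := by
    rw [hcy]
    exact (Finset.sum_subset (Finset.subset_univ S)
      (fun i _ hi => by rw [hcS i hi, zero_smul])).symm
  -- rational Gram matrix
  choose g hg using hrat
  set Gq : Matrix ι ι ℚ := Matrix.of g with hGq
  set R : Matrix ι ι ℝ := Matrix.of fun i j => b.repr (ω i) j with hR
  have hRG : R * Gq.map (Rat.cast : ℚ → ℝ) = 1 := by
    ext i k
    have key : ⟪ω i, b k⟫_ℝ = ∑ j, b.repr (ω i) j * ⟪b j, b k⟫_ℝ := by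
      conv_lhs => rw [← b.sum_repr (ω i)]
      rw [sum_inner]
      exact Finset.sum_congr rfl fun j _ => real_inner_smul_left _ _ _
    simp only [Matrix.mul_apply, hR, hGq, Matrix.map_apply, Matrix.of_apply, Matrix.one_apply]
    rw [← hω i k, key]
    exact Finset.sum_congr rfl fun j _ => by rw [hg]
  have hdetR : (Gq.map (Rat.cast : ℚ → ℝ)).det ≠ 0 := by
    intro h
    have := congrArg Matrix.det hRG
    rw [Matrix.det_mul, h, mul_zero, Matrix.det_one] at this
    exact zero_ne_one this
  have hcast : ((Gq.det : ℚ) : ℝ) = (Gq.map (Rat.cast : ℚ → ℝ)).det := by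
    simpa using RingHom.map_det (Rat.castHom ℝ) Gq
  have hdetq : Gq.det ≠ 0 := by
    intro h
    apply hdetR
    rw [← hcast, h]
    norm_num
  have hGinv : Gq * Gq⁻¹ = 1 := Matrix.mul_nonsing_inv _ (isUnit_iff_ne_zero.mpr hdetq)
  have hRQ : R = (Gq⁻¹).map (Rat.cast : ℚ → ℝ) := by
    have hmap : Gq.map (Rat.cast : ℚ → ℝ) * (Gq⁻¹).map (Rat.cast : ℚ → ℝ) = 1 := by
      have h := congrArg ((Rat.castHom ℝ).mapMatrix) hGinv
      rw [map_mul, map_one] at h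
      simpa [RingHom.mapMatrix_apply] using h
    calc R = R * (Gq.map (Rat.cast : ℚ → ℝ) * (Gq⁻¹).map (Rat.cast : ℚ → ℝ)) := by
            rw [hmap, mul_one]
      _ = (R * Gq.map (Rat.cast : ℚ → ℝ)) * (Gq⁻¹).map (Rat.cast : ℚ → ℝ) := by
            rw [mul_assoc]
      _ = (Gq⁻¹).map (Rat.cast : ℚ → ℝ) := by rw [hRG, one_mul]
  set q : ι → ι → ℚ := fun i => Gq⁻¹ i with hq
  have hωq : ∀ i, ω i = ∑ j, ((q i j : ℝ)) • b j := by
    intro i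
    conv_lhs => rw [← b.sum_repr (ω i)]
    refine Finset.sum_congr rfl fun j _ => ?_
    have h1 : (b.repr (ω i)) j = ((q i j : ℚ) : ℝ) := by
      have h2 : R i j = (Gq⁻¹).map (Rat.cast : ℚ → ℝ) i j := by rw [hRQ]
      simpa [hR, hq, Matrix.map_apply] using h2
    rw [h1]
  -- the coefficient map
  set φ : (ι → ℚ) → V := fun u => ∑ j, ((u j : ℝ)) • b j with hφ
  have hφinner : ∀ u v : ι → ℚ, ⟪φ u, φ v⟫_ℝ = ((Gq.toBilin' u v : ℚ) : ℝ) := by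
    intro u v
    rw [Matrix.toBilin'_apply]
    push_cast
    simp only [hφ, sum_inner, inner_sum, real_inner_smul_left, real_inner_smul_right, hg]
    rw [Finset.sum_comm]
    refine Finset.sum_congr rfl fun i _ => Finset.sum_congr rfl fun j _ => ?_
    simp only [hGq, Matrix.of_apply]
    ring
  have hφzero : ∀ u : ι → ℚ, φ u = 0 → u = 0 := by
    intro u hu
    have h0 : b.equivFun.symm (fun k => ((u k : ℝ))) = 0 := by
      rw [Module.Basis.equivFun_symm_apply]; exact hu
    have h1 : (fun k => ((u k : ℝ))) = (0 : ι → ℝ) := by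
      apply b.equivFun.symm.injective
      rw [h0, map_zero]
    funext j
    have h2 := congrFun h1 j
    simp only [Pi.zero_apply] at h2 ⊢
    exact_mod_cast h2
  have hrefl : Gq.toBilin'.IsRefl := by
    intro u v huv
    have hsy : Gq.toBilin' v u = Gq.toBilin' u v := by
      apply Rat.cast_injective (α := ℝ)
      rw [← hφinner, ← hφinner, real_inner_comm]
    rw [hsy, huv]
  set U : Submodule ℚ (ι → ℚ) := Submodule.span ℚ (q '' ↑S) with hU
  have hnd : (Gq.toBilin'.restrict U).Nondegenerate := by
    constructor
    all_goals
      intro u hu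
      have h0 : Gq.toBilin' (u : ι → ℚ) (u : ι → ℚ) = 0 := hu u
      have : ((Gq.toBilin' (u : ι → ℚ) (u : ι → ℚ) : ℚ) : ℝ) = 0 := by exact_mod_cast h0
      rw [← hφinner] at this
      have := hφzero _ ((inner_self_eq_zero (𝕜 := ℝ)).mp this)
      exact Subtype.ext this
  have hcompl := Gq.toBilin'.isCompl_orthogonal_of_restrict_nondegenerate hrefl hnd
  obtain ⟨x', hx'⟩ := hx
  have hxU : x' ∈ U ⊔ Gq.toBilin'.orthogonal U := by rw [hcompl.sup_eq_top]; trivial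
  obtain ⟨p', hp'U, r', hr', hx'eq⟩ := Submodule.mem_sup.mp hxU
  -- φ is additive / smul-compatible
  have hφadd : ∀ u v : ι → ℚ, φ (u + v) = φ u + φ v := by
    intro u v
    simp [hφ, Finset.sum_add_distrib, add_smul]
  have hφsmul : ∀ (a : ℚ) (u : ι → ℚ), φ (a • u) = (a : ℝ) • φ u := by
    intro a u
    simp [hφ, Finset.smul_sum, mul_smul]
  -- x - φ p' is orthogonal to the ω i, i ∈ S
  have hA : ∀ i ∈ S, ⟪x - φ p', ω i⟫_ℝ = 0 := by
    intro i hiS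
    have hxφ : x = φ x' := hx'
    have hsub : x - φ p' = φ r' := by
      rw [hxφ, ← hx'eq, hφadd]
      abel
    rw [hsub, real_inner_comm, hωq i]
    have hqi : q i ∈ U := Submodule.subset_span ⟨i, hiS, rfl⟩
    have := (LinearMap.BilinForm.mem_orthogonal_iff.mp hr') (q i) hqi
    rw [show (∑ j, ((q i j : ℝ)) • b j) = φ (q i) from rfl, hφinner, this]
    norm_num
  -- φ p' lies in the real span of the ω i, i ∈ S
  have hpW : φ p' ∈ Submodule.span ℝ (ω '' ↑S) := by
    refine Submodule.span_induction (p := fun u _ => φ u ∈ Submodule.span ℝ (ω '' ↑S))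
      ?_ ?_ ?_ ?_ hp'U
    · rintro u ⟨i, hiS, rfl⟩
      have he : φ (q i) = ω i := (hωq i).symm
      rw [he]
      exact Submodule.subset_span ⟨i, hiS, rfl⟩
    · simp [hφ]
    · intro u v _ _ hu hv
      rw [hφadd]
      exact Submodule.add_mem _ hu hv
    · intro a u _ hu
      rw [hφsmul]
      exact Submodule.smul_mem _ _ hu
  have hyW : y ∈ Submodule.span ℝ (ω '' ↑S) := by
    rw [hyS]
    exact Submodule.sum_mem _ fun i hi =>
      Submodule.smul_mem _ _ (Submodule.subset_span ⟨i, hi, rfl⟩)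
  -- orthogonality to generators extends to the span
  have hext : ∀ v : V, (∀ i ∈ S, ⟪v, ω i⟫_ℝ = 0) →
      ∀ w ∈ Submodule.span ℝ (ω '' ↑S), ⟪v, w⟫_ℝ = 0 := by
    intro v hv w hw
    refine Submodule.span_induction (p := fun w _ => ⟪v, w⟫_ℝ = 0) ?_ ?_ ?_ ?_ hw
    · rintro w ⟨i, hiS, rfl⟩; exact hv i hiS
    · simp
    · intro a u _ _ ha hu; rw [inner_add_right, ha, hu, add_zero]
    · intro a u _ hu; rw [real_inner_smul_right, hu, mul_zero]
  have hBy : ∀ i ∈ S, ⟪x - y, ω i⟫_ℝ = 0 := by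
    intro i hi
    simpa [hS] using hi
  -- y = φ p'
  have hdiff : y - φ p' ∈ Submodule.span ℝ (ω '' ↑S) := Submodule.sub_mem _ hyW hpW
  have hfinal : y = φ p' := by
    have e1 : ⟪x - φ p', y - φ p'⟫_ℝ = 0 := hext _ hA _ hdiff
    have e2 : ⟪x - y, y - φ p'⟫_ℝ = 0 := hext _ hBy _ hdiff
    have h0 : ⟪y - φ p', y - φ p'⟫_ℝ = 0 := by
      calc ⟪y - φ p', y - φ p'⟫_ℝ
          = ⟪(x - φ p') - (x - y), y - φ p'⟫_ℝ := by
            rw [show (x - φ p') - (x - y) = y - φ p' by abel]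
        _ = ⟪x - φ p', y - φ p'⟫_ℝ - ⟪x - y, y - φ p'⟫_ℝ := inner_sub_left _ _ _
        _ = 0 := by rw [e1, e2, sub_zero]
    have := (inner_self_eq_zero (𝕜 := ℝ)).mp h0
    exact sub_eq_zero.mp this
  exact ⟨p', hfinal⟩
end

section
/- Assume ⟨α_i, α_j⟩ ≤ 0 for i ≠ j. Then 𝔏(x) is the unique element y of { y ∈ V⁺ : y ≥ x } such that ⟨y, α_i⟩ = 0 for every index i for which the coefficient of α_i in y − x is nonzero. -/
open scoped InnerProductSpace
open Finset

/-- For an obtuse basis, `𝔏(x)` is the unique element `y` of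
`{y ∈ V⁺ | y ≥ x}` such that `⟪y, α i⟫ = 0` whenever the coefficient of `α i`
in `y - x` is nonzero. -/
theorem langlands_retraction_unique_characterization
    {V ι : Type*} [NormedAddCommGroup V] [InnerProductSpace ℝ V] [FiniteDimensional ℝ V]
    [Fintype ι] [DecidableEq ι] (b : Module.Basis ι ℝ V) (ω : ι → V)
    (hω : ∀ i j, ⟪ω i, b j⟫_ℝ = if i = j then 1 else 0)
    (hobtuse : ∀ i j, i ≠ j → ⟪(b i : V), b j⟫_ℝ ≤ 0)
    (x Lx : V) (hLx : IsClosestPoint (coneGen ω) x Lx) :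
    (Lx ∈ coneGen ω ∧ Lx - x ∈ coneGen (⇑b) ∧
        ∀ i, b.repr (Lx - x) i ≠ 0 → ⟪Lx, (b i : V)⟫_ℝ = 0) ∧
      ∀ y, y ∈ coneGen ω → y - x ∈ coneGen (⇑b) →
        (∀ i, b.repr (y - x) i ≠ 0 → ⟪y, (b i : V)⟫_ℝ = 0) → y = Lx := by
  classical
  obtain ⟨hmem, hmin⟩ := hLx
  -- coefficient extraction for sums of ω's
  have key1 : ∀ (c : ι → ℝ) (i : ι), ⟪∑ j, c j • ω j, (b i : V)⟫_ℝ = c i := by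
    intro c i
    rw [sum_inner]
    simp only [real_inner_smul_left, hω]
    simp
  -- inner of cone member with b is the coefficient, hence nonneg
  have hinner_b : ∀ z ∈ coneGen ω, ∀ i, 0 ≤ ⟪z, (b i : V)⟫_ℝ := by
    rintro z ⟨c, hc, rfl⟩ i
    rw [key1]
    exact hc i
  -- inner with ω gives repr coefficient
  have key_repr : ∀ (v : V) (i : ι), ⟪v, ω i⟫_ℝ = b.repr v i := by
    intro v i
    conv_lhs => rw [← b.sum_repr v]
    rw [sum_inner]
    have h : ∀ j, ⟪(b j : V), ω i⟫_ℝ = if i = j then 1 else 0 := fun j => by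
      rw [real_inner_comm, hω]
    simp only [real_inner_smul_left, h]
    simp
  -- vanishing inners against b imply zero
  have hzero : ∀ v : V, (∀ i, ⟪v, (b i : V)⟫_ℝ = 0) → v = 0 := by
    intro v hv
    have h2 : ∀ w, ⟪v, w⟫_ℝ = 0 := by
      intro w
      rw [← b.sum_repr w, inner_sum]
      simp [real_inner_smul_right, hv]
    exact inner_self_eq_zero.mp (h2 v)
  -- membership criterion for the ω-cone
  have key3 : ∀ z : V, (∀ i, 0 ≤ ⟪z, (b i : V)⟫_ℝ) → z ∈ coneGen ω := by
    intro z hz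
    refine ⟨fun i => ⟪z, (b i : V)⟫_ℝ, hz, ?_⟩
    have h : z - ∑ j, ⟪z, (b j : V)⟫_ℝ • ω j = 0 := by
      apply hzero
      intro i
      rw [inner_sub_left, key1, sub_self]
    exact sub_eq_zero.mp h
  -- convexity
  have hconv : Convex ℝ (coneGen ω) := by
    intro u hu v hv a c ha hc hac
    apply key3
    intro i
    rw [inner_add_left, real_inner_smul_left, real_inner_smul_left]
    have h1 := hinner_b u hu i
    have h2 := hinner_b v hv i
    positivity
  have hzero_mem : (0 : V) ∈ coneGen ω := key3 0 (by simp)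
  -- the variational inequality for Lx
  haveI : Nonempty ↑(coneGen ω) := ⟨⟨0, hzero_mem⟩⟩
  have hinf : ‖x - Lx‖ = ⨅ w : coneGen ω, ‖x - (w : V)‖ := by
    apply le_antisymm
    · exact le_ciInf fun w => by simpa [dist_eq_norm] using hmin w w.2
    · exact ciInf_le ⟨0, by rintro r ⟨w, rfl⟩; positivity⟩ (⟨Lx, hmem⟩ : coneGen ω)
  have hvar : ∀ w ∈ coneGen ω, ⟪x - Lx, w - Lx⟫_ℝ ≤ 0 :=
    (norm_eq_iInf_iff_real_inner_le_zero hconv hmem).mp hinf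
  -- ω i is in the cone
  have hωmem : ∀ i, ω i ∈ coneGen ω := by
    intro i
    apply key3
    intro j
    rw [hω]
    split_ifs <;> norm_num
  -- Lx + ω i is in the cone
  have hrepr_nonneg : ∀ i, 0 ≤ b.repr (Lx - x) i := by
    intro i
    have hz : Lx + ω i ∈ coneGen ω := by
      apply key3
      intro j
      rw [inner_add_left]
      exact add_nonneg (hinner_b Lx hmem j) (hinner_b (ω i) (hωmem i) j)
    have h := hvar _ hz
    rw [add_sub_cancel_left] at h
    have h2 : 0 ≤ ⟪Lx - x, ω i⟫_ℝ := by
      have : Lx - x = -(x - Lx) := by abel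
      rw [this, inner_neg_left]
      linarith
    rwa [key_repr] at h2
  have horth : ⟪x - Lx, Lx⟫_ℝ = 0 := by
    have h1 := hvar ((2:ℝ) • Lx) (by
      apply key3
      intro j
      rw [real_inner_smul_left]
      have := hinner_b Lx hmem j
      linarith)
    have h0 := hvar 0 hzero_mem
    have e1 : (2:ℝ) • Lx - Lx = Lx := by
      rw [two_smul]; abel
    rw [e1] at h1
    rw [zero_sub, inner_neg_right] at h0
    linarith
  -- slackness for Lx
  have hsum : ⟪Lx - x, Lx⟫_ℝ = ∑ i, b.repr (Lx - x) i * ⟪(b i : V), Lx⟫_ℝ := by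
    conv_lhs => rw [← b.sum_repr (Lx - x)]
    rw [sum_inner]
    simp [real_inner_smul_left]
  have hsum0 : ∑ i, b.repr (Lx - x) i * ⟪(b i : V), Lx⟫_ℝ = 0 := by
    rw [← hsum]
    have : Lx - x = -(x - Lx) := by abel
    rw [this, inner_neg_left, horth, neg_zero]
  have hterm : ∀ i ∈ Finset.univ, b.repr (Lx - x) i * ⟪(b i : V), Lx⟫_ℝ = 0 := by
    rw [← Finset.sum_eq_zero_iff_of_nonneg]
    · exact hsum0
    · intro i _
      exact mul_nonneg (hrepr_nonneg i)
        (by rw [real_inner_comm]; exact hinner_b Lx hmem i)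
  refine ⟨⟨hmem, ⟨fun i => b.repr (Lx - x) i, hrepr_nonneg, (b.sum_repr (Lx - x)).symm⟩,
    ?_⟩, ?_⟩
  · intro i hi
    have h := hterm i (Finset.mem_univ i)
    rcases mul_eq_zero.mp h with h' | h'
    · exact absurd h' hi
    · rwa [real_inner_comm] at h'
  -- uniqueness
  · intro y hy hyc hslack
    have hd : ∀ i, 0 ≤ b.repr (y - x) i := by
      obtain ⟨c, hc, hyx⟩ := hyc
      intro i
      rw [hyx, b.repr_sum_self]
      exact hc i
    have hy_orth : ⟪y - x, y⟫_ℝ = 0 := by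
      conv_lhs => rw [← b.sum_repr (y - x)]
      rw [sum_inner]
      apply Finset.sum_eq_zero
      intro i _
      rw [real_inner_smul_left]
      by_cases h : b.repr (y - x) i = 0
      · rw [h, zero_mul]
      · rw [real_inner_comm, hslack i h, mul_zero]
    have hy_pos : 0 ≤ ⟪y - x, Lx⟫_ℝ := by
      conv_lhs => rw [show (0:ℝ) = 0 from rfl]
      conv_rhs => rw [← b.sum_repr (y - x)]
      rw [sum_inner]
      apply Finset.sum_nonneg
      intro i _
      rw [real_inner_smul_left]
      exact mul_nonneg (hd i) (by rw [real_inner_comm]; exact hinner_b Lx hmem i)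
    have hA : ⟪x - y, Lx - y⟫_ℝ ≤ 0 := by
      have e : x - y = -(y - x) := by abel
      rw [e, inner_neg_left, inner_sub_right, hy_orth]
      linarith
    have hB : ⟪x - Lx, y - Lx⟫_ℝ ≤ 0 := hvar y hy
    have hC : ⟪Lx - y, Lx - y⟫_ℝ ≤ 0 := by
      have e : Lx - y = (x - y) - (x - Lx) := by abel
      have e3 : ⟪Lx - y, Lx - y⟫_ℝ = ⟪x - y, Lx - y⟫_ℝ - ⟪x - Lx, Lx - y⟫_ℝ := by
        rw [← inner_sub_left, ← e]
      have e2 : y - Lx = -(Lx - y) := by abel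
      rw [e2, inner_neg_right] at hB
      rw [e3]
      linarith
    have : Lx - y = 0 := inner_self_eq_zero.mp
      (le_antisymm hC real_inner_self_nonneg)
    have := sub_eq_zero.mp this
    exact this.symm
end

section
/- For the SL(n) root system, under the identification of V with functions f : {0,…,n} → ℝ vanishing at 0 and n, the Langlands retraction sends f to the smallest concave function g : {0,…,n} → ℝ with g(0) = g(n) = 0 and g ≥ f pointwise (the concave majorant); in particular this smallest concave majorant exists. -/
open scoped InnerProductSpace
open Finset

/-- Partial sum of coordinates: sum of `w j` over `j < k`. -/
private def psum {N : ℕ} (w : EuclideanSpace ℝ (Fin N)) (k : ℕ) : ℝ :=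
  ∑ j : Fin N, if (j : ℕ) < k then w j else 0

private lemma psum_zero {N : ℕ} (w : EuclideanSpace ℝ (Fin N)) : psum w 0 = 0 := by
  simp [psum]

private lemma psum_top {N : ℕ} (w : EuclideanSpace ℝ (Fin N)) (k : ℕ) (hk : N ≤ k) :
    psum w k = ∑ j, w j := by
  refine Finset.sum_congr rfl fun j _ => ?_
  rw [if_pos (lt_of_lt_of_le j.isLt hk)]

private lemma psum_step {N : ℕ} (w : EuclideanSpace ℝ (Fin N)) (k : Fin N) :
    psum w ((k : ℕ) + 1) = psum w (k : ℕ) + w k := by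
  have h : ∀ j : Fin N, (if (j : ℕ) < (k : ℕ) + 1 then w j else 0)
      = (if (j : ℕ) < (k : ℕ) then w j else 0) + (if j = k then w j else 0) := by
    intro j
    rcases eq_or_ne j k with h | h
    · subst h; rw [if_pos (by omega), if_neg (by omega), if_pos rfl, zero_add]
    · have hjk : (j : ℕ) ≠ (k : ℕ) := fun hh => h (Fin.ext hh)
      rw [if_neg h, add_zero]
      exact if_congr (by omega) rfl rfl
  rw [show psum w ((k : ℕ) + 1) = ∑ j : Fin N, (if (j : ℕ) < (k : ℕ) + 1 then w j else 0) from rfl,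
    Finset.sum_congr rfl fun j _ => h j, Finset.sum_add_distrib]
  congr 1
  simp [Finset.sum_ite_eq']

private lemma psum_sub {N : ℕ} (a b : EuclideanSpace ℝ (Fin N)) (k : ℕ) :
    psum (a - b) k = psum a k - psum b k := by
  simp only [psum]
  rw [← Finset.sum_sub_distrib]
  refine Finset.sum_congr rfl fun j _ => ?_
  have : (a - b) j = a j - b j := rfl
  rw [this]; split_ifs <;> simp

private lemma psum_smulsum {N m : ℕ} (c : Fin m → ℝ) (u : Fin m → EuclideanSpace ℝ (Fin N))
    (k : ℕ) : psum (∑ j, c j • u j) k = ∑ j, c j * psum (u j) k := by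
  simp only [psum]
  calc ∑ l : Fin N, (if (l : ℕ) < k then (∑ j, c j • u j) l else 0)
      = ∑ l : Fin N, ∑ j, (if (l : ℕ) < k then c j * u j l else 0) := by
        refine Finset.sum_congr rfl fun l _ => ?_
        have h1 : (∑ j, c j • u j) l = ∑ j, c j * u j l := by
          rw [WithLp.ofLp_sum, Finset.sum_apply l univ _]; rfl
        split_ifs with h
        · rw [h1]
        · simp
    _ = ∑ j, ∑ l : Fin N, (if (l : ℕ) < k then c j * u j l else 0) := Finset.sum_comm
    _ = ∑ j, c j * ∑ l : Fin N, (if (l : ℕ) < k then u j l else 0) := by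
        refine Finset.sum_congr rfl fun j _ => ?_
        rw [Finset.mul_sum]
        refine Finset.sum_congr rfl fun l _ => ?_
        split_ifs <;> simp

private lemma sum_coord_smulsum {N m : ℕ} (c : Fin m → ℝ)
    (u : Fin m → EuclideanSpace ℝ (Fin N)) :
    ∑ l, (∑ j, c j • u j) l = ∑ j, c j * ∑ l, u j l := by
  have h := psum_smulsum c u N
  rw [psum_top _ _ le_rfl] at h
  rw [h]
  exact Finset.sum_congr rfl fun j _ => by rw [psum_top _ _ le_rfl]

private lemma psum_single {N : ℕ} (a : Fin N) (k : ℕ) :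
    psum (EuclideanSpace.single a (1 : ℝ)) k = if (a : ℕ) < k then 1 else 0 := by
  simp only [psum, EuclideanSpace.single_apply]
  rw [Finset.sum_eq_single a]
  · simp
  · intro b _ hb; simp [hb]
  · intro hh; exact absurd (Finset.mem_univ a) hh

section Main

variable {m : ℕ} (α : Fin m → EuclideanSpace ℝ (Fin (m + 1)))
  (hα : ∀ i, α i = EuclideanSpace.single i.castSucc 1 - EuclideanSpace.single i.succ 1)

include hα in
lemma psum_alpha (j : Fin m) (k : ℕ) :
    psum (α j) k = if k = (j : ℕ) + 1 then 1 else 0 := by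
  rw [hα j, psum_sub, psum_single, psum_single]
  have hc : ((j.castSucc : Fin (m + 1)) : ℕ) = (j : ℕ) := rfl
  have hs : ((j.succ : Fin (m + 1)) : ℕ) = (j : ℕ) + 1 := rfl
  rw [hc, hs]
  rcases Nat.lt_trichotomy k ((j : ℕ) + 1) with h | h | h
  · rw [if_neg (by omega), if_neg (by omega), if_neg (by omega)]; ring
  · rw [if_pos (by omega), if_neg (by omega), if_pos (by omega)]; ring
  · rw [if_pos (by omega), if_pos (by omega), if_neg (by omega)]; ring

include hα in
lemma psum_cone_nonneg {w : EuclideanSpace ℝ (Fin (m + 1))}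
    (hw : ∃ c : Fin m → ℝ, (∀ i, 0 ≤ c i) ∧ w = ∑ i, c i • α i) (k : ℕ) :
    0 ≤ psum w k := by
  obtain ⟨c, hc, rfl⟩ := hw
  rw [psum_smulsum]
  refine Finset.sum_nonneg fun j _ => mul_nonneg (hc j) ?_
  rw [psum_alpha α hα]
  split_ifs <;> norm_num

include hα in
/-- Representation: a sum-zero vector is the combination of the simple roots with
coefficients the partial sums. -/
lemma repr_alpha (w : EuclideanSpace ℝ (Fin (m + 1))) (hw : ∑ l, w l = 0) :
    w = ∑ j : Fin m, psum w ((j : ℕ) + 1) • α j := by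
  ext k
  have hcoord : (∑ j : Fin m, psum w ((j : ℕ) + 1) • α j) k
      = (∑ i ∈ Finset.range m, if (k : ℕ) = i then psum w (i + 1) else 0)
        - (∑ i ∈ Finset.range m, if (k : ℕ) = i + 1 then psum w (i + 1) else 0) := by
    rw [WithLp.ofLp_sum, Finset.sum_apply k univ _]
    have h1 : ∀ j : Fin m, (psum w ((j : ℕ) + 1) • α j) k
        = (if (k : ℕ) = (j : ℕ) then psum w ((j : ℕ) + 1) else 0)
          - (if (k : ℕ) = (j : ℕ) + 1 then psum w ((j : ℕ) + 1) else 0) := by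
      intro j
      have e0 : (psum w ((j : ℕ) + 1) • α j) k = psum w ((j : ℕ) + 1) * α j k := rfl
      have e1 : α j k = (if k = j.castSucc then (1 : ℝ) else 0)
          - (if k = j.succ then 1 else 0) := by
        rw [hα j]
        simp only [PiLp.sub_apply, EuclideanSpace.single_apply]
      rw [e0, e1]
      have ec : (k = j.castSucc) ↔ ((k : ℕ) = (j : ℕ)) := by
        rw [Fin.ext_iff]; rfl
      have es : (k = j.succ) ↔ ((k : ℕ) = (j : ℕ) + 1) := by
        rw [Fin.ext_iff]; rfl
      rw [if_congr ec rfl rfl, if_congr es rfl rfl]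
      split_ifs <;> ring
    rw [Finset.sum_congr rfl fun j _ => h1 j, Finset.sum_sub_distrib]
    congr 1
    · rw [← Fin.sum_univ_eq_sum_range (fun i => if (k : ℕ) = i then psum w (i + 1) else 0) m]
    · rw [← Fin.sum_univ_eq_sum_range (fun i => if (k : ℕ) = i + 1 then psum w (i + 1) else 0) m]
  rw [hcoord, Finset.sum_ite_eq (Finset.range m) ((k : ℕ)) (fun i => psum w (i + 1))]
  rcases Nat.eq_zero_or_pos (k : ℕ) with hk0 | hkpos
  · have hB : (∑ i ∈ Finset.range m, if (k : ℕ) = i + 1 then psum w (i + 1) else 0) = 0 := by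
      refine Finset.sum_eq_zero fun i _ => ?_
      have : ¬ ((k : ℕ) = i + 1) := by omega
      rw [if_neg this]
    rw [hB, hk0]
    rcases Nat.eq_zero_or_pos m with hm | hm
    · subst hm
      have hk : k = 0 := Fin.ext (by omega)
      have hw1 : w 0 = 0 := by
        rw [← hw, Fin.sum_univ_one]
      rw [hk]
      simpa using hw1
    · rw [if_pos (Finset.mem_range.mpr hm)]
      have hstep := psum_step w k
      rw [hk0] at hstep
      rw [psum_zero] at hstep
      rw [show psum w (0 + 1) - 0 = psum w (0 + 1) from by ring, show (0:ℕ) + 1 = 1 from rfl]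
      linarith
  · obtain ⟨K, hK⟩ : ∃ K, (k : ℕ) = K + 1 := ⟨(k : ℕ) - 1, by omega⟩
    have hB : (∑ i ∈ Finset.range m, if (k : ℕ) = i + 1 then psum w (i + 1) else 0)
        = if K ∈ Finset.range m then psum w (K + 1) else 0 := by
      have hcong : ∀ i ∈ Finset.range m, (if (k : ℕ) = i + 1 then psum w (i + 1) else 0)
          = (if K = i then psum w (i + 1) else 0) := by
        intro i _
        have : ((k : ℕ) = i + 1) ↔ (K = i) := by omega
        rw [if_congr this rfl rfl]
      rw [Finset.sum_congr rfl hcong]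
      exact Finset.sum_ite_eq (Finset.range m) K (fun i => psum w (i + 1))
    rw [hB]
    have hKm : K < m := by have := k.isLt; omega
    rw [if_pos (Finset.mem_range.mpr hKm), ← hK]
    by_cases hkm : (k : ℕ) < m
    · rw [if_pos (Finset.mem_range.mpr hkm)]
      have hstep := psum_step w k
      linarith
    · have hkm' : (k : ℕ) = m := by have := k.isLt; omega
      have hnotmem : (k : ℕ) ∉ Finset.range m := by rw [Finset.mem_range]; omega
      rw [if_neg hnotmem]
      have hstep := psum_step w k
      have htop := psum_top w ((k : ℕ) + 1) (by omega)
      rw [hw] at htop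
      linarith


include hα in
lemma inner_omega_eq_psum (ω : Fin m → EuclideanSpace ℝ (Fin (m + 1)))
    (hdual : ∀ i j, ⟪ω i, α j⟫_ℝ = if i = j then 1 else 0)
    (w : EuclideanSpace ℝ (Fin (m + 1))) (hw : ∑ l, w l = 0) (i : Fin m) :
    ⟪w, ω i⟫_ℝ = psum w ((i : ℕ) + 1) := by
  have h2 : ⟪ω i, ∑ j : Fin m, psum w ((j : ℕ) + 1) • α j⟫_ℝ = psum w ((i : ℕ) + 1) := by
    rw [inner_sum]
    rw [Finset.sum_congr rfl fun j _ => real_inner_smul_right (ω i) (α j) (psum w ((j : ℕ) + 1))]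
    rw [Finset.sum_congr rfl fun j _ => by rw [hdual i j]]
    simp [mul_ite, Finset.sum_ite_eq]
  rw [← repr_alpha α hα w hw] at h2
  rw [real_inner_comm]
  exact h2

lemma inner_alpha_coeff (ω : Fin m → EuclideanSpace ℝ (Fin (m + 1)))
    (hdual : ∀ i j, ⟪ω i, α j⟫_ℝ = if i = j then 1 else 0)
    (c : Fin m → ℝ) (i : Fin m) :
    ⟪∑ j, c j • ω j, α i⟫_ℝ = c i := by
  rw [sum_inner]
  rw [Finset.sum_congr rfl fun j _ => real_inner_smul_left (ω j) (α i) (c j)]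
  rw [Finset.sum_congr rfl fun j _ => by rw [hdual j i]]
  simp [mul_ite, Finset.sum_ite_eq']

end Main

/-- For the root system of `SL(n)` (here `n = m + 1`), under the
identification of `v ∈ V` with the function `f : {0, …, n} → ℝ` vanishing at `0` and `n`
with `f i = ⟪v, ω i⟫` for `0 < i < n`, the Langlands retraction (i.e. the least element `L`
of `{y ∈ V⁺ | y ≥ v}`) corresponds to the smallest concave function `g` with
`g 0 = g n = 0` and `g ≥ f` pointwise; in particular this smallest concave majorant exists. -/
theorem sl_n_langlands_retraction_is_concave_majorant
    (m : ℕ)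
    (α : Fin m → EuclideanSpace ℝ (Fin (m + 1)))
    (hα : ∀ i, α i = EuclideanSpace.single i.castSucc 1 - EuclideanSpace.single i.succ 1)
    (ω : Fin m → EuclideanSpace ℝ (Fin (m + 1)))
    (hωV : ∀ i, ∑ j, ω i j = 0)
    (hdual : ∀ i j, ⟪ω i, α j⟫_ℝ = if i = j then 1 else 0)
    (v : EuclideanSpace ℝ (Fin (m + 1))) (hv : ∑ j, v j = 0)
    (f : ℕ → ℝ) (hf0 : f 0 = 0) (hfn : f (m + 1) = 0)
    (hfi : ∀ i : Fin m, f (i + 1) = ⟪v, ω i⟫_ℝ)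
    -- `L` is the Langlands retraction of `v`: the least element of `{y ∈ V⁺ | y ≥ v}`
    (L : EuclideanSpace ℝ (Fin (m + 1)))
    (hL : L ∈ coneGen ω) (hLv : L - v ∈ coneGen α)
    (hLleast : ∀ z, z ∈ coneGen ω → z - v ∈ coneGen α → z - L ∈ coneGen α)
    (g : ℕ → ℝ) (hg0 : g 0 = 0) (hgn : g (m + 1) = 0)
    (hgi : ∀ i : Fin m, g (i + 1) = ⟪L, ω i⟫_ℝ) :
    (∀ k, 0 < k → k < m + 1 → g (k + 1) + g (k - 1) ≤ 2 * g k) ∧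
      (∀ k ≤ m + 1, f k ≤ g k) ∧
      ∀ h : ℕ → ℝ, h 0 = 0 → h (m + 1) = 0 →
        (∀ k, 0 < k → k < m + 1 → h (k + 1) + h (k - 1) ≤ 2 * h k) →
        (∀ k ≤ m + 1, f k ≤ h k) → ∀ k ≤ m + 1, g k ≤ h k := by
  have hsumα : ∀ j : Fin m, ∑ l, α j l = 0 := by
    intro j
    rw [hα j]
    simp only [PiLp.sub_apply, EuclideanSpace.single_apply]
    rw [Finset.sum_sub_distrib]
    simp
  have hsumconeω : ∀ w ∈ coneGen ω, ∑ l, w l = 0 := by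
    rintro w ⟨c, hc, rfl⟩
    rw [sum_coord_smulsum]
    simp [hωV]
  have hsumL : ∑ l, L l = 0 := hsumconeω L hL
  -- identification of f and g with partial sums
  have hfP : ∀ k ≤ m + 1, f k = psum v k := by
    intro k hk
    rcases Nat.eq_zero_or_pos k with h0 | h0
    · rw [h0, hf0, psum_zero]
    rcases eq_or_lt_of_le hk with htop | hlt
    · rw [htop, hfn, psum_top v (m + 1) le_rfl, hv]
    · have hkm : k - 1 < m := by omega
      have hval : ((⟨k - 1, hkm⟩ : Fin m) : ℕ) = k - 1 := rfl
      have h1 := hfi ⟨k - 1, hkm⟩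
      rw [inner_omega_eq_psum α hα ω hdual v hv ⟨k - 1, hkm⟩] at h1
      rw [hval, show k - 1 + 1 = k from by omega] at h1
      exact h1
  have hgP : ∀ k ≤ m + 1, g k = psum L k := by
    intro k hk
    rcases Nat.eq_zero_or_pos k with h0 | h0
    · rw [h0, hg0, psum_zero]
    rcases eq_or_lt_of_le hk with htop | hlt
    · rw [htop, hgn, psum_top L (m + 1) le_rfl, hsumL]
    · have hkm : k - 1 < m := by omega
      have hval : ((⟨k - 1, hkm⟩ : Fin m) : ℕ) = k - 1 := rfl
      have h1 := hgi ⟨k - 1, hkm⟩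
      rw [inner_omega_eq_psum α hα ω hdual L hsumL ⟨k - 1, hkm⟩] at h1
      rw [hval, show k - 1 + 1 = k from by omega] at h1
      exact h1
  refine ⟨?_, ?_, ?_⟩
  · -- concavity of g
    intro k hk0 hkn
    obtain ⟨c, hc, hLdef⟩ := hL
    have hkm : k - 1 < m := by omega
    set i : Fin m := ⟨k - 1, hkm⟩ with hi
    have hinner1 : ⟪L, α i⟫_ℝ = c i := by
      rw [hLdef]; exact inner_alpha_coeff α ω hdual c i
    have hinner2 : ⟪L, α i⟫_ℝ = L i.castSucc - L i.succ := by
      rw [hα i, inner_sub_right]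
      simp [EuclideanSpace.inner_single_right]
    have hvalc : ((i.castSucc : Fin (m + 1)) : ℕ) = k - 1 := rfl
    have hvals0 : ((i.succ : Fin (m + 1)) : ℕ) = k - 1 + 1 := rfl
    have hvals : ((i.succ : Fin (m + 1)) : ℕ) = k := by omega
    have s1 := psum_step L i.castSucc
    have s2 := psum_step L i.succ
    rw [hvalc, show k - 1 + 1 = k from by omega] at s1
    rw [hvals] at s2
    rw [hgP (k + 1) (by omega), hgP k (by omega), hgP (k - 1) (by omega)]
    have hcnn := hc i
    linarith
  · -- f ≤ g
    intro k hk
    have h2 : 0 ≤ psum (L - v) k := psum_cone_nonneg α hα hLv k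
    rw [psum_sub] at h2
    rw [hfP k hk, hgP k hk]
    linarith
  · -- minimality
    intro h h0 hn1 hconc hfh k hk
    let z : EuclideanSpace ℝ (Fin (m + 1)) := WithLp.toLp 2 fun l : Fin (m + 1) => h ((l : ℕ) + 1) - h (l : ℕ)
    have hzl : ∀ l : Fin (m + 1), z l = h ((l : ℕ) + 1) - h (l : ℕ) := fun l => rfl
    have hzsum : ∑ l, z l = 0 := by
      have ht : ∑ l : Fin (m + 1), (h ((l : ℕ) + 1) - h (l : ℕ)) = h (m + 1) - h 0 := by
        rw [Fin.sum_univ_eq_sum_range (fun i => h (i + 1) - h i) (m + 1),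
          Finset.sum_range_sub h (m + 1)]
      rw [Finset.sum_congr rfl fun l _ => hzl l, ht, h0, hn1]
      ring
    have hPz : ∀ k ≤ m + 1, psum z k = h k := by
      intro k hk
      induction k with
      | zero => rw [psum_zero, h0]
      | succ K ih =>
        have hK : K < m + 1 := by omega
        have hstep := psum_step z ⟨K, hK⟩
        have hv1 : ((⟨K, hK⟩ : Fin (m + 1)) : ℕ) = K := rfl
        rw [hv1] at hstep
        rw [hstep, ih (by omega), hzl ⟨K, hK⟩, hv1]
        ring
    have hcz : ∀ i : Fin m, ⟪z, α i⟫_ℝ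
        = (h ((i : ℕ) + 1) - h (i : ℕ)) - (h ((i : ℕ) + 1 + 1) - h ((i : ℕ) + 1)) := by
      intro i
      rw [hα i, inner_sub_right]
      have e1 : ⟪z, EuclideanSpace.single i.castSucc (1 : ℝ)⟫_ℝ = z i.castSucc := by
        simp [EuclideanSpace.inner_single_right]
      have e2 : ⟪z, EuclideanSpace.single i.succ (1 : ℝ)⟫_ℝ = z i.succ := by
        simp [EuclideanSpace.inner_single_right]
      rw [e1, e2, hzl i.castSucc, hzl i.succ]
      rfl
    have hczn : ∀ i : Fin m, 0 ≤ ⟪z, α i⟫_ℝ := by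
      intro i
      rw [hcz i]
      have hcon := hconc ((i : ℕ) + 1) (by omega) (by omega)
      have hsub : (i : ℕ) + 1 - 1 = (i : ℕ) := by omega
      rw [hsub] at hcon
      linarith
    have hzω : z ∈ coneGen ω := by
      refine ⟨fun i => ⟪z, α i⟫_ℝ, hczn, ?_⟩
      have husum : ∑ l, (z - ∑ i, ⟪z, α i⟫_ℝ • ω i) l = 0 := by
        have h1 : ∑ l, (∑ i, ⟪z, α i⟫_ℝ • ω i) l = 0 := by
          rw [sum_coord_smulsum]; simp [hωV]
        have h2 : ∀ l : Fin (m + 1), (z - ∑ i, ⟪z, α i⟫_ℝ • ω i) l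
            = z l - (∑ i, ⟪z, α i⟫_ℝ • ω i) l := fun l => rfl
        rw [Finset.sum_congr rfl fun l _ => h2 l, Finset.sum_sub_distrib, hzsum, h1]
        ring
      have huα : ∀ j : Fin m, ⟪z - ∑ i, ⟪z, α i⟫_ℝ • ω i, α j⟫_ℝ = 0 := by
        intro j
        rw [inner_sub_left, inner_alpha_coeff α ω hdual _ j]
        ring
      have huz : z - ∑ i, ⟪z, α i⟫_ℝ • ω i = 0 := by
        set u := z - ∑ i, ⟪z, α i⟫_ℝ • ω i with hu
        have hr := repr_alpha α hα u husum
        have hself : ⟪u, ∑ j : Fin m, psum u ((j : ℕ) + 1) • α j⟫_ℝ = 0 := by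
          rw [inner_sum]
          rw [Finset.sum_congr rfl fun j _ =>
            real_inner_smul_right u (α j) (psum u ((j : ℕ) + 1))]
          refine Finset.sum_eq_zero fun j _ => ?_
          rw [huα j]
          ring
        rw [← hr] at hself
        exact inner_self_eq_zero.mp hself
      have := sub_eq_zero.mp huz
      exact this
    have hzv : z - v ∈ coneGen α := by
      have hsubsum : ∑ l, (z - v) l = 0 := by
        have h2 : ∀ l : Fin (m + 1), (z - v) l = z l - v l := fun l => rfl
        rw [Finset.sum_congr rfl fun l _ => h2 l, Finset.sum_sub_distrib, hzsum, hv]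
        ring
      refine ⟨fun j => psum (z - v) ((j : ℕ) + 1), fun j => ?_, repr_alpha α hα _ hsubsum⟩
      show 0 ≤ psum (z - v) ((j : ℕ) + 1)
      rw [psum_sub]
      have h1 : psum z ((j : ℕ) + 1) = h ((j : ℕ) + 1) := hPz _ (by omega)
      have h2 : f ((j : ℕ) + 1) = psum v ((j : ℕ) + 1) := hfP _ (by omega)
      have h3 := hfh ((j : ℕ) + 1) (by omega)
      linarith
    have hZL := hLleast z hzω hzv
    have h2 : 0 ≤ psum (z - L) k := psum_cone_nonneg α hα hZL k
    rw [psum_sub, hPz k hk] at h2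
    rw [hgP k hk]
    linarith
end
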